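/- arXiv:1506.03759 — 7 statements merged into one kernel-verified Lean document; each statement's English description precedes it below -/
import Mathlib

section
/- For n = 7, the maximum number of edges in a P³₃-free 3-uniform hypergraph on 7 vertices is 20, and the unique (up to isomorphism) extremal 3-graph is the complete 3-graph K³₆ on 6 vertices together with one isolated vertex. -/
/-- `H` contains a copy of the 3-uniform linear path `P³₃`:
three edges with consecutive intersections of size 1 and disjoint end edges. -/
def HasP33 {V : Type*} [DecidableEq V] (H : Finset (Finset V)) : Prop :=
  ∃ e₁ e₂ e₃, e₁ ∈ H ∧ e₂ ∈ H ∧ e₃ ∈ H ∧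
    (e₁ ∩ e₂).card = 1 ∧ (e₂ ∩ e₃).card = 1 ∧ e₁ ∩ e₃ = ∅

open Finset

namespace TuranP33Aux

abbrev F7 := Finset (Fin 7)

def A0 : F7 := {0,1,2}
def B0 : F7 := {3,4,5}
def S6 : F7 := {0,1,2,3,4,5}
def Striples : Finset F7 := S6.powersetCard 3
def DvA : Finset F7 := {{0,1,6},{0,2,6},{1,2,6}}
def DvB : Finset F7 := {{3,4,6},{3,5,6},{4,5,6}}

def X (t : F7) : Finset F7 :=
  Striples.filter (fun f => (t ∩ f).card = 1 ∧
    (((f ∩ B0).card = 1 ∧ t ∩ B0 = ∅) ∨ ((f ∩ A0).card = 1 ∧ t ∩ A0 = ∅)))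

set_option maxRecDepth 40000 in
lemma key2 : ∀ e : F7, e.card = 3 → (6:Fin 7) ∈ e →
    ¬((e ∩ A0).card = 1 ∧ (e ∩ B0).card = 1) → e ∈ DvA ∪ DvB := by decide

set_option maxRecDepth 40000 in
lemma key3 : ∀ e : F7, e.card = 3 → (6:Fin 7) ∉ e → e ∈ Striples := by decide

set_option maxRecDepth 40000 in
lemma c1 : ∀ t ∈ DvA, (Striples \ X t).card = 14 := by decide

set_option maxRecDepth 40000 in
lemma c2 : ∀ t ∈ DvB, (Striples \ X t).card = 14 := by decide

set_option maxRecDepth 40000 in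
set_option maxHeartbeats 1000000 in
lemma c3 : ∀ t ∈ DvA, ∀ t' ∈ DvB, (Striples \ (X t ∪ X t')).card = 8 := by decide

lemma concrete (H : Finset F7) (h3 : ∀ e ∈ H, e.card = 3) (hP : ¬ HasP33 H)
    (hA : A0 ∈ H) (hB : B0 ∈ H) :
    H.card ≤ 20 ∧ (H.card = 20 → H = Striples) := by
  have key1 : ∀ e ∈ H, ¬((e ∩ A0).card = 1 ∧ (e ∩ B0).card = 1) := by
    rintro e he ⟨h1, h2⟩
    exact hP ⟨A0, e, B0, hA, he, hB, by rwa [Finset.inter_comm], h2, by decide⟩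
  have hexcl : ∀ t' ∈ H, ∀ f ∈ X t', f ∉ H := by
    intro t' ht' f hf hfH
    simp only [X, mem_filter] at hf
    obtain ⟨hfS, h1, hcase⟩ := hf
    rcases hcase with ⟨hb1, hb2⟩ | ⟨ha1, ha2⟩
    · exact hP ⟨t', f, B0, ht', hfH, hB, h1, hb1, hb2⟩
    · exact hP ⟨t', f, A0, ht', hfH, hA, h1, ha1, ha2⟩
  by_cases hT : ∃ t ∈ H, (6:Fin 7) ∈ t
  · -- some edge through vertex 6 : card ≤ 17
    obtain ⟨t, ht, ht6⟩ := hT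
    have htDv : t ∈ DvA ∪ DvB := key2 t (h3 t ht) ht6 (key1 t ht)
    have hb17 : H.card ≤ 17 := by
      by_cases haa : ∃ ta ∈ H, ta ∈ DvA
      · obtain ⟨ta, htaH, htaA⟩ := haa
        by_cases hbb : ∃ tb ∈ H, tb ∈ DvB
        · obtain ⟨tb, htbH, htbB⟩ := hbb
          have hsub : H ⊆ (Striples \ (X ta ∪ X tb)) ∪ (DvA ∪ DvB) := by
            intro e he
            by_cases h6 : (6:Fin 7) ∈ e
            · exact mem_union_right _ (key2 e (h3 e he) h6 (key1 e he))
            · refine mem_union_left _ (mem_sdiff.2 ⟨key3 e (h3 e he) h6, ?_⟩)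
              intro hmem
              rcases mem_union.1 hmem with h | h
              · exact hexcl ta htaH e h he
              · exact hexcl tb htbH e h he
          calc H.card ≤ ((Striples \ (X ta ∪ X tb)) ∪ (DvA ∪ DvB)).card :=
                card_le_card hsub
            _ ≤ (Striples \ (X ta ∪ X tb)).card + (DvA ∪ DvB).card := card_union_le _ _
            _ ≤ 8 + 6 := by
                rw [c3 ta htaA tb htbB]
                exact Nat.add_le_add_left (by decide) 8
            _ ≤ 17 := by norm_num
        · -- all 6-edges in DvA
          have hsub : H ⊆ (Striples \ X ta) ∪ DvA := by
            intro e he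
            by_cases h6 : (6:Fin 7) ∈ e
            · rcases mem_union.1 (key2 e (h3 e he) h6 (key1 e he)) with h | h
              · exact mem_union_right _ h
              · exact absurd ⟨e, he, h⟩ hbb
            · exact mem_union_left _ (mem_sdiff.2 ⟨key3 e (h3 e he) h6,
                fun hmem => hexcl ta htaH e hmem he⟩)
          calc H.card ≤ ((Striples \ X ta) ∪ DvA).card := card_le_card hsub
            _ ≤ (Striples \ X ta).card + DvA.card := card_union_le _ _
            _ ≤ 14 + 3 := by
                rw [c1 ta htaA]
                exact Nat.add_le_add_left (by decide) 14
            _ ≤ 17 := by norm_num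
      · -- all 6-edges in DvB
        have htB : t ∈ DvB := by
          rcases mem_union.1 htDv with h | h
          · exact absurd ⟨t, ht, h⟩ haa
          · exact h
        have hsub : H ⊆ (Striples \ X t) ∪ DvB := by
          intro e he
          by_cases h6 : (6:Fin 7) ∈ e
          · rcases mem_union.1 (key2 e (h3 e he) h6 (key1 e he)) with h | h
            · exact absurd ⟨e, he, h⟩ haa
            · exact mem_union_right _ h
          · exact mem_union_left _ (mem_sdiff.2 ⟨key3 e (h3 e he) h6,
              fun hmem => hexcl t ht e hmem he⟩)
        calc H.card ≤ ((Striples \ X t) ∪ DvB).card := card_le_card hsub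
          _ ≤ (Striples \ X t).card + DvB.card := card_union_le _ _
          _ ≤ 14 + 3 := by
              rw [c2 t htB]
              exact Nat.add_le_add_left (by decide) 14
          _ ≤ 17 := by norm_num
    exact ⟨hb17.trans (by norm_num), fun h => absurd (h ▸ hb17) (by norm_num)⟩
  · -- no edge through 6
    push_neg at hT
    have hsub : H ⊆ Striples := fun e he => key3 e (h3 e he) (hT e he)
    have hcard : H.card ≤ 20 := by
      have := card_le_card hsub
      rwa [show Striples.card = 20 from by decide] at this
    refine ⟨hcard, fun h => eq_of_subset_of_card_le hsub ?_⟩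
    rw [show Striples.card = 20 from by decide, h]

/-! ### Intersecting families have at most 18 edges -/

def pp : Fin 18 → Finset F7 :=
  ![{{2,4,6},{1,3,5}}, {{1,5,6},{2,3,4}}, {{0,2,3},{1,4,6}}, {{0,5,6},{1,2,3}},
    {{0,1,6},{3,4,5}}, {{0,4,5},{1,2,6}}, {{3,5,6},{0,1,4}}, {{0,1,5},{3,4,6}},
    {{1,4,5},{2,3,6}}, {{0,3,4},{2,5,6}}, {{0,2,5},{1,3,6}}, {{0,3,5},{1,2,4}},
    {{0,1,2},{4,5,6}}, {{1,3,4},{0,2,6}}, {{2,3,5},{0,4,6}}, {{2,4,5},{0,1,3}},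
    {{1,2,5},{0,3,6}}, {{0,2,4}}]

set_option maxRecDepth 100000 in
lemma pp_cover : ∀ e : F7, e.card = 3 → ∃ i : Fin 18, e ∈ pp i := by decide

set_option maxRecDepth 40000 in
lemma pp_disj : ∀ i : Fin 18, ∀ a ∈ pp i, ∀ b ∈ pp i, a ≠ b → a ∩ b = ∅ := by decide

lemma intersecting_bound (H : Finset F7) (h3 : ∀ e ∈ H, e.card = 3)
    (hint : ∀ e ∈ H, ∀ f ∈ H, e ∩ f ≠ ∅) : H.card ≤ 18 := by
  have hsub : H ⊆ Finset.univ.biUnion (fun i : Fin 18 => H ∩ pp i) := by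
    intro e he
    obtain ⟨i, hi⟩ := pp_cover e (h3 e he)
    exact mem_biUnion.2 ⟨i, mem_univ i, mem_inter.2 ⟨he, hi⟩⟩
  have h1 : ∀ i : Fin 18, (H ∩ pp i).card ≤ 1 := by
    intro i
    by_contra hgt
    push_neg at hgt
    obtain ⟨a, ha, b, hb, hab⟩ := Finset.one_lt_card.1 hgt
    exact hint a (mem_inter.1 ha).1 b (mem_inter.1 hb).1
      (pp_disj i a (mem_inter.1 ha).2 b (mem_inter.1 hb).2 hab)
  calc H.card ≤ (Finset.univ.biUnion (fun i : Fin 18 => H ∩ pp i)).card :=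
        card_le_card hsub
    _ ≤ ∑ i : Fin 18, (H ∩ pp i).card := card_biUnion_le
    _ ≤ ∑ _i : Fin 18, 1 := Finset.sum_le_sum (fun i _ => h1 i)
    _ = 18 := by simp

/-! ### Permutation normalizing a disjoint pair of triples -/

lemma exists_perm (A B : F7) (hA : A.card = 3) (hB : B.card = 3) (hAB : A ∩ B = ∅) :
    ∃ σ : Equiv.Perm (Fin 7), A.image σ = A0 ∧ B.image σ = B0 := by
  obtain ⟨x, y, z, hxy, hxz, hyz, rfl⟩ := Finset.card_eq_three.1 hA
  obtain ⟨a, b, c, hab, hac, hbc, rfl⟩ := Finset.card_eq_three.1 hB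
  have hdisj : Disjoint ({x,y,z} : F7) ({a,b,c} : F7) :=
    disjoint_iff_inter_eq_empty.2 hAB
  have hcompl : ((({x,y,z} : F7) ∪ {a,b,c})ᶜ).card = 1 := by
    rw [card_compl, card_union_of_disjoint hdisj, hA, hB]
    rfl
  obtain ⟨v, hv⟩ := Finset.card_eq_one.1 hcompl
  have hvmem : v ∉ (({x,y,z} : F7) ∪ {a,b,c}) := by
    rw [← Finset.mem_compl, hv]
    exact mem_singleton_self v
  set g : Fin 7 → Fin 7 := ![x, y, z, a, b, c, v] with hg
  have hsurj : Function.Surjective g := by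
    intro w
    by_cases hw : w ∈ (({x,y,z} : F7) ∪ {a,b,c})
    · rcases mem_union.1 hw with h | h
      · rcases mem_insert.1 h with h1 | h1
        · exact ⟨0, h1.symm⟩
        rcases mem_insert.1 h1 with h2 | h2
        · exact ⟨1, h2.symm⟩
        · exact ⟨2, (mem_singleton.1 h2).symm⟩
      · rcases mem_insert.1 h with h1 | h1
        · exact ⟨3, h1.symm⟩
        rcases mem_insert.1 h1 with h2 | h2
        · exact ⟨4, h2.symm⟩
        · exact ⟨5, (mem_singleton.1 h2).symm⟩
    · refine ⟨6, ?_⟩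
      rw [← Finset.mem_compl, hv, mem_singleton] at hw
      exact hw.symm
  have hbij : Function.Bijective g := Finite.surjective_iff_bijective.1 hsurj
  set ε := Equiv.ofBijective g hbij with hε
  refine ⟨ε.symm, ?_, ?_⟩
  · have e0 : ε.symm x = 0 := ε.symm_apply_eq.2 rfl
    have e1 : ε.symm y = 1 := ε.symm_apply_eq.2 rfl
    have e2 : ε.symm z = 2 := ε.symm_apply_eq.2 rfl
    simp [image_insert, image_singleton, e0, e1, e2, A0]
  · have e3 : ε.symm a = 3 := ε.symm_apply_eq.2 rfl
    have e4 : ε.symm b = 4 := ε.symm_apply_eq.2 rfl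
    have e5 : ε.symm c = 5 := ε.symm_apply_eq.2 rfl
    simp [image_insert, image_singleton, e3, e4, e5, B0]

/-! ### Transfer of `HasP33` along an embedding -/

lemma hasP33_of_map {f : Fin 7 ↪ Fin 7} {H : Finset F7}
    (h : HasP33 (H.map (Finset.mapEmbedding f).toEmbedding)) : HasP33 H := by
  obtain ⟨e₁, e₂, e₃, h1, h2, h3, c12, c23, c13⟩ := h
  simp only [Finset.mem_map, Finset.mapEmbedding_apply, RelEmbedding.coe_toEmbedding] at h1 h2 h3
  obtain ⟨a1, ha1, rfl⟩ := h1
  obtain ⟨a2, ha2, rfl⟩ := h2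
  obtain ⟨a3, ha3, rfl⟩ := h3
  refine ⟨a1, a2, a3, ha1, ha2, ha3, ?_, ?_, ?_⟩
  · rw [← Finset.map_inter, Finset.card_map] at c12; exact c12
  · rw [← Finset.map_inter, Finset.card_map] at c23; exact c23
  · rw [← Finset.map_inter] at c13
    exact Finset.map_eq_empty.1 c13

/-! ### Main bound -/

lemma main_bound (H : Finset F7) (h3 : ∀ e ∈ H, e.card = 3) (hP : ¬ HasP33 H) :
    H.card ≤ 20 ∧ (H.card = 20 → ∃ v : Fin 7, H = (Finset.univ.erase v).powersetCard 3) := by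
  by_cases hdis : ∃ A ∈ H, ∃ B ∈ H, A ∩ B = ∅
  · obtain ⟨A, hAH, B, hBH, hAB⟩ := hdis
    obtain ⟨σ, hσA, hσB⟩ := exists_perm A B (h3 A hAH) (h3 B hBH) hAB
    set f := σ.toEmbedding with hf
    set Ψ := (Finset.mapEmbedding f).toEmbedding with hΨ
    set H' := H.map Ψ with hH'
    have hmapim : ∀ s : F7, Ψ s = s.image σ := by
      intro s
      rw [hΨ, RelEmbedding.coe_toEmbedding, Finset.mapEmbedding_apply, Finset.map_eq_image]
      rfl
    have h3' : ∀ e ∈ H', e.card = 3 := by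
      intro e he
      obtain ⟨a, haH, rfl⟩ := Finset.mem_map.1 he
      rw [show Ψ a = a.map f from Finset.mapEmbedding_apply, Finset.card_map]
      exact h3 a haH
    have hP' : ¬ HasP33 H' := fun h => hP (hasP33_of_map h)
    have hA' : A0 ∈ H' := by
      have := Finset.mem_map_of_mem Ψ hAH
      rwa [hmapim A, hσA] at this
    have hB' : B0 ∈ H' := by
      have := Finset.mem_map_of_mem Ψ hBH
      rwa [hmapim B, hσB] at this
    obtain ⟨hle, heq⟩ := concrete H' h3' hP' hA' hB'
    rw [hH', Finset.card_map] at hle heq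
    refine ⟨hle, fun hc => ?_⟩
    refine ⟨σ.symm 6, ?_⟩
    have hES : (Finset.univ.erase (σ.symm 6)).map f = Finset.univ.erase (6 : Fin 7) := by
      ext w
      simp only [Finset.mem_map_equiv, Finset.mem_erase, Finset.mem_univ, and_true, hf]
      rw [Equiv.toEmbedding] at *
      constructor
      · intro hw hw6
        exact hw (by rw [hw6])
      · intro hw hw6
        exact hw (by simpa using congrArg σ hw6)
    have hfinal : H.map Ψ = ((Finset.univ.erase (σ.symm 6)).powersetCard 3).map Ψ := by
      rw [← Finset.powersetCard_map, hES]
      rw [heq hc]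
      rw [show (Finset.univ.erase (6 : Fin 7)) = S6 from by decide]
      rfl
    exact Finset.map_injective Ψ hfinal
  · push_neg at hdis
    have h18 := intersecting_bound H h3 (fun A hA B hB => (hdis A hA B hB).ne_empty)
    exact ⟨h18.trans (by norm_num), fun h => absurd (h ▸ h18) (by norm_num)⟩

set_option maxRecDepth 40000 in
lemma noP33_S : ¬ HasP33 Striples := by
  rintro ⟨e₁, e₂, e₃, h1, h2, h3, c12, c23, c13⟩
  simp only [Striples, Finset.mem_powersetCard] at h1 h2 h3
  have hu : e₁ ∪ e₃ = S6 := by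
    apply eq_of_subset_of_card_le (union_subset h1.1 h3.1)
    rw [card_union_of_disjoint (disjoint_iff_inter_eq_empty.2 c13), h1.2, h3.2]
    decide
  have hdisj2 : Disjoint (e₂ ∩ e₁) (e₂ ∩ e₃) :=
    Finset.disjoint_of_subset_left (Finset.inter_subset_right)
      (Finset.disjoint_of_subset_right (Finset.inter_subset_right)
        (disjoint_iff_inter_eq_empty.2 c13))
  have he2 : (e₂ ∩ e₁) ∪ (e₂ ∩ e₃) = e₂ := by
    rw [← Finset.inter_union_distrib_left, hu, Finset.inter_eq_left]
    exact h2.1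
  have : e₂.card = (e₂ ∩ e₁).card + (e₂ ∩ e₃).card := by
    rw [← card_union_of_disjoint hdisj2, he2]
  rw [h2.2, Finset.inter_comm e₂ e₁, c12, c23] at this
  norm_num at this

end TuranP33Aux

open TuranP33Aux in
theorem turan_P33_seven :
    IsGreatest {m : ℕ | ∃ H : Finset (Finset (Fin 7)),
      (∀ e ∈ H, e.card = 3) ∧ ¬ HasP33 H ∧ H.card = m} 20 ∧
    ∀ H : Finset (Finset (Fin 7)), (∀ e ∈ H, e.card = 3) → ¬ HasP33 H → H.card = 20 →
      ∃ v : Fin 7, H = (Finset.univ.erase v).powersetCard 3 := by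
  refine ⟨⟨⟨Striples, fun e he => (Finset.mem_powersetCard.1 he).2, noP33_S, by decide⟩, ?_⟩, ?_⟩
  · rintro m ⟨H, h3, hP, rfl⟩
    exact (main_bound H h3 hP).1
  · intro H h3 hP hcard
    exact (main_bound H h3 hP).2 hcard
end

section
/- Let C be a triangle (copy of C³₃) on vertex set U in a 3-graph, W disjoint from U, and let T be the set of triples of the form {xᵢ,yᵢ,w} or {xᵢ,xⱼ,w} with w ∈ W (notation as in the standard labelling of C³₃). If e ∈ T, g is a triple contained in W, and e ∩ g ≠ ∅, then C together with e and g contains a copy of P³₃. -/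
/-- Two triples sharing exactly their first vertex intersect in a singleton. -/
lemma tri_inter {V : Type*} [DecidableEq V] (a b c d f : V)
    (h1 : b ≠ a) (h2 : b ≠ d) (h3 : b ≠ f)
    (h4 : c ≠ a) (h5 : c ≠ d) (h6 : c ≠ f) :
    ({a, b, c} : Finset V) ∩ ({a, d, f} : Finset V) = {a} := by
  ext z
  simp only [Finset.mem_inter, Finset.mem_insert, Finset.mem_singleton]
  constructor
  · rintro ⟨hz1 | hz1 | hz1, hz2 | hz2 | hz2⟩ <;> subst hz1 <;>
      first
        | rfl
        | exact absurd hz2 (fun hh => h1 hh)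
        | exact absurd hz2 (fun hh => h2 hh)
        | exact absurd hz2 (fun hh => h3 hh)
        | exact absurd hz2 (fun hh => h4 hh)
        | exact absurd hz2 (fun hh => h5 hh)
        | exact absurd hz2 (fun hh => h6 hh)
  · rintro rfl
    exact ⟨Or.inl rfl, Or.inl rfl⟩

theorem T_edge_meets_W_triple_gives_P33 (V : Type*) [DecidableEq V]
    (x₁ x₂ x₃ y₁ y₂ y₃ : V)
    (hdist : ({x₁, x₂, x₃, y₁, y₂, y₃} : Finset V).card = 6)
    (w : V) (hw : w ∉ ({x₁, x₂, x₃, y₁, y₂, y₃} : Finset V))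
    (e : Finset V)
    (he : e = {x₁, y₁, w} ∨ e = {x₂, y₂, w} ∨ e = {x₃, y₃, w} ∨
          e = {x₁, x₂, w} ∨ e = {x₁, x₃, w} ∨ e = {x₂, x₃, w})
    (g : Finset V) (hg3 : g.card = 3)
    (hgU : g ∩ ({x₁, x₂, x₃, y₁, y₂, y₃} : Finset V) = ∅)
    (heg : (e ∩ g).Nonempty) :
    HasP33 ({({x₁, y₂, x₃} : Finset V), {x₂, y₃, x₁}, {x₃, y₁, x₂}} ∪ {e, g}) := by
  -- distinctness of the six vertices
  have h6 : ([x₁, x₂, x₃, y₁, y₂, y₃] : List V).toFinset.card = 6 := by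
    simpa using hdist
  have hnd : ([x₁, x₂, x₃, y₁, y₂, y₃] : List V).Nodup := by
    have := Multiset.toFinset_card_eq_card_iff_nodup
      (m := (([x₁, x₂, x₃, y₁, y₂, y₃] : List V) : Multiset V))
    exact (Multiset.coe_nodup).mp (this.mp (by simpa using h6))
  simp only [List.nodup_cons, List.mem_cons, List.mem_singleton, List.not_mem_nil,
    or_false, not_or, List.nodup_nil, and_true] at hnd
  obtain ⟨⟨h12, h13, h1y1, h1y2, h1y3⟩, ⟨h23, h2y1, h2y2, h2y3⟩,
    ⟨h3y1, h3y2, h3y3⟩, ⟨hy12, hy13⟩, hy23, -⟩ := hnd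
  simp only [Finset.mem_insert, Finset.mem_singleton, not_or] at hw
  obtain ⟨hw1, hw2, hw3, hwy1, hwy2, hwy3⟩ := hw
  -- g is disjoint from the six vertices
  have hgU' : ∀ a ∈ g, a ≠ x₁ ∧ a ≠ x₂ ∧ a ≠ x₃ ∧ a ≠ y₁ ∧ a ≠ y₂ ∧ a ≠ y₃ := by
    intro a ha
    have := Finset.eq_empty_iff_forall_notMem.mp hgU a
    simp only [Finset.mem_inter, Finset.mem_insert, Finset.mem_singleton, not_and, not_or] at this
    exact this ha
  -- e ∩ g = {w}
  have hegw : e ∩ g = {w} := by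
    have hsub : e ∩ g ⊆ {w} := by
      intro a ha
      rw [Finset.mem_inter] at ha
      obtain ⟨hae, hag⟩ := ha
      obtain ⟨hg1, hg2, hg3', hg4, hg5, hg6⟩ := hgU' a hag
      rcases he with h | h | h | h | h | h <;> rw [h] at hae <;>
        simp only [Finset.mem_insert, Finset.mem_singleton] at hae <;>
        simp only [Finset.mem_singleton] <;>
        (rcases hae with rfl | rfl | rfl <;>
          first
            | rfl
            | exact absurd rfl hg1
            | exact absurd rfl hg2
            | exact absurd rfl hg3'
            | exact absurd rfl hg4
            | exact absurd rfl hg5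
            | exact absurd rfl hg6)
    obtain ⟨a, ha⟩ := heg
    have haw : a = w := Finset.mem_singleton.mp (hsub ha)
    subst haw
    apply Finset.Subset.antisymm hsub
    intro b hb
    rw [Finset.mem_singleton] at hb
    subst hb
    exact ha
  -- triangle edges are disjoint from g
  have hCg : ∀ a b c : V, (a = x₁ ∨ a = x₂ ∨ a = x₃ ∨ a = y₁ ∨ a = y₂ ∨ a = y₃) →
      (b = x₁ ∨ b = x₂ ∨ b = x₃ ∨ b = y₁ ∨ b = y₂ ∨ b = y₃) →
      (c = x₁ ∨ c = x₂ ∨ c = x₃ ∨ c = y₁ ∨ c = y₂ ∨ c = y₃) →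
      ({a, b, c} : Finset V) ∩ g = ∅ := by
    intro a b c ha hb hc
    rw [Finset.eq_empty_iff_forall_notMem]
    intro d hd
    rw [Finset.mem_inter, Finset.mem_insert, Finset.mem_insert, Finset.mem_singleton] at hd
    obtain ⟨hd1, hd2⟩ := hd
    obtain ⟨k1, k2, k3, k4, k5, k6⟩ := hgU' d hd2
    rcases hd1 with rfl | rfl | rfl <;>
      [rcases ha with h' | h' | h' | h' | h' | h';
       rcases hb with h' | h' | h' | h' | h' | h';
       rcases hc with h' | h' | h' | h' | h' | h'] <;>
      first
        | exact k1 h'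
        | exact k2 h'
        | exact k3 h'
        | exact k4 h'
        | exact k5 h'
        | exact k6 h'
  -- memberships in the host hypergraph
  have hA : ({x₁, y₂, x₃} : Finset V) ∈
      ({({x₁, y₂, x₃} : Finset V), {x₂, y₃, x₁}, {x₃, y₁, x₂}} ∪ {e, g}) :=
    Finset.mem_union_left _ (Finset.mem_insert_self _ _)
  have hB : ({x₂, y₃, x₁} : Finset V) ∈
      ({({x₁, y₂, x₃} : Finset V), {x₂, y₃, x₁}, {x₃, y₁, x₂}} ∪ {e, g}) :=
    Finset.mem_union_left _ (Finset.mem_insert_of_mem (Finset.mem_insert_self _ _))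
  have hC : ({x₃, y₁, x₂} : Finset V) ∈
      ({({x₁, y₂, x₃} : Finset V), {x₂, y₃, x₁}, {x₃, y₁, x₂}} ∪ {e, g}) :=
    Finset.mem_union_left _
      (Finset.mem_insert_of_mem (Finset.mem_insert_of_mem (Finset.mem_singleton_self _)))
  have he' : e ∈ ({({x₁, y₂, x₃} : Finset V), {x₂, y₃, x₁}, {x₃, y₁, x₂}} ∪ {e, g}) :=
    Finset.mem_union_right _ (Finset.mem_insert_self _ _)
  have hg' : g ∈ ({({x₁, y₂, x₃} : Finset V), {x₂, y₃, x₁}, {x₃, y₁, x₂}} ∪ {e, g}) :=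
    Finset.mem_union_right _ (Finset.mem_insert_of_mem (Finset.mem_singleton_self _))
  have hegc : (e ∩ g).card = 1 := by rw [hegw]; exact Finset.card_singleton w
  have ne : ∀ {a b : V}, ¬a = b → b ≠ a := fun h hh => h hh.symm
  rcases he with h | h | h | h | h | h
  · refine ⟨{x₁, y₂, x₃}, e, g, hA, he', hg', ?_, hegc, ?_⟩
    · rw [h, tri_inter x₁ y₂ x₃ y₁ w (ne h1y2) (ne hy12) (ne hwy2) (ne h13) h3y1 (ne hw3)]
      exact Finset.card_singleton _
    · exact hCg _ _ _ (Or.inl rfl) (Or.inr (Or.inr (Or.inr (Or.inr (Or.inl rfl)))))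
        (Or.inr (Or.inr (Or.inl rfl)))
  · refine ⟨{x₂, y₃, x₁}, e, g, hB, he', hg', ?_, hegc, ?_⟩
    · rw [h, tri_inter x₂ y₃ x₁ y₂ w (ne h2y3) (ne hy23) (ne hwy3) h12 h1y2 (ne hw1)]
      exact Finset.card_singleton _
    · exact hCg _ _ _ (Or.inr (Or.inl rfl)) (Or.inr (Or.inr (Or.inr (Or.inr (Or.inr rfl)))))
        (Or.inl rfl)
  · refine ⟨{x₃, y₁, x₂}, e, g, hC, he', hg', ?_, hegc, ?_⟩
    · rw [h, tri_inter x₃ y₁ x₂ y₃ w (ne h3y1) hy13 (ne hwy1) h23 h2y3 (ne hw2)]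
      exact Finset.card_singleton _
    · exact hCg _ _ _ (Or.inr (Or.inr (Or.inl rfl))) (Or.inr (Or.inr (Or.inr (Or.inl rfl))))
        (Or.inr (Or.inl rfl))
  · refine ⟨{x₁, y₂, x₃}, e, g, hA, he', hg', ?_, hegc, ?_⟩
    · rw [h, tri_inter x₁ y₂ x₃ x₂ w (ne h1y2) (ne h2y2) (ne hwy2) (ne h13) (ne h23) (ne hw3)]
      exact Finset.card_singleton _
    · exact hCg _ _ _ (Or.inl rfl) (Or.inr (Or.inr (Or.inr (Or.inr (Or.inl rfl)))))
        (Or.inr (Or.inr (Or.inl rfl)))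
  · refine ⟨{x₂, y₃, x₁}, e, g, hB, he', hg', ?_, hegc, ?_⟩
    · rw [h, show ({x₂, y₃, x₁} : Finset V) = {x₁, x₂, y₃} by
        rw [Finset.pair_comm y₃ x₁, Finset.insert_comm x₂ x₁],
        tri_inter x₁ x₂ y₃ x₃ w (ne h12) h23 (ne hw2) (ne h1y3) (ne h3y3) (ne hwy3)]
      exact Finset.card_singleton _
    · exact hCg _ _ _ (Or.inr (Or.inl rfl)) (Or.inr (Or.inr (Or.inr (Or.inr (Or.inr rfl)))))
        (Or.inl rfl)
  · refine ⟨{x₁, y₂, x₃}, e, g, hA, he', hg', ?_, hegc, ?_⟩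
    · rw [h, show ({x₁, y₂, x₃} : Finset V) = {x₃, x₁, y₂} by
        rw [Finset.pair_comm y₂ x₃, Finset.insert_comm x₁ x₃],
        show ({x₂, x₃, w} : Finset V) = {x₃, x₂, w} from Finset.insert_comm x₂ x₃ {w},
        tri_inter x₃ x₁ y₂ x₂ w h13 h12 (ne hw1) (ne h3y2) (ne h2y2) (ne hwy2)]
      exact Finset.card_singleton _
    · exact hCg _ _ _ (Or.inl rfl) (Or.inr (Or.inr (Or.inr (Or.inr (Or.inl rfl)))))
        (Or.inr (Or.inr (Or.inl rfl)))
end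

section
/- Let H be a P³₃-free 3-graph containing a triangle C on U, with W = V(H)\U of size s ≥ 3. With T₁ = {{xᵢ,yᵢ,w} : i∈{1,2,3}, w∈W}, the number of edges of H belonging to T₁ is at most s. -/
private lemma card5 {V : Type*} [DecidableEq V] (a b c d e : V) :
    ({a, b, c, d, e} : Finset V).card ≤ 5 := by
  apply (Finset.card_insert_le _ _).trans
  have h4 : ({b, c, d, e} : Finset V).card ≤ 4 := by
    apply (Finset.card_insert_le _ _).trans
    have h3 : ({c, d, e} : Finset V).card ≤ 3 := by
      apply (Finset.card_insert_le _ _).trans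
      have h2 : ({d, e} : Finset V).card ≤ 2 := by
        apply (Finset.card_insert_le _ _).trans
        simp
      omega
    omega
  omega

set_option maxHeartbeats 1600000 in
private lemma six_distinct {V : Type*} [DecidableEq V] {x₁ x₂ x₃ y₁ y₂ y₃ : V}
    (hdist : ({x₁, x₂, x₃, y₁, y₂, y₃} : Finset V).card = 6) :
    x₁ ≠ x₂ ∧ x₁ ≠ x₃ ∧ x₁ ≠ y₁ ∧ x₁ ≠ y₂ ∧ x₁ ≠ y₃ ∧ x₂ ≠ x₃ ∧ x₂ ≠ y₁ ∧ x₂ ≠ y₂ ∧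
      x₂ ≠ y₃ ∧ x₃ ≠ y₁ ∧ x₃ ≠ y₂ ∧ x₃ ≠ y₃ ∧ y₁ ≠ y₂ ∧ y₁ ≠ y₃ ∧ y₂ ≠ y₃ := by
  refine ⟨?_, ?_, ?_, ?_, ?_, ?_, ?_, ?_, ?_, ?_, ?_, ?_, ?_, ?_, ?_⟩ <;> rintro rfl
  · have hsub : ({x₁, x₁, x₃, y₁, y₂, y₃} : Finset V) ⊆ {x₁, x₃, y₁, y₂, y₃} := by
      intro a ha; simp only [Finset.mem_insert, Finset.mem_singleton] at ha ⊢; tauto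
    have := (Finset.card_le_card hsub).trans (card5 x₁ x₃ y₁ y₂ y₃); omega
  · have hsub : ({x₁, x₂, x₁, y₁, y₂, y₃} : Finset V) ⊆ {x₁, x₂, y₁, y₂, y₃} := by
      intro a ha; simp only [Finset.mem_insert, Finset.mem_singleton] at ha ⊢; tauto
    have := (Finset.card_le_card hsub).trans (card5 x₁ x₂ y₁ y₂ y₃); omega
  · have hsub : ({x₁, x₂, x₃, x₁, y₂, y₃} : Finset V) ⊆ {x₁, x₂, x₃, y₂, y₃} := by
      intro a ha; simp only [Finset.mem_insert, Finset.mem_singleton] at ha ⊢; tauto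
    have := (Finset.card_le_card hsub).trans (card5 x₁ x₂ x₃ y₂ y₃); omega
  · have hsub : ({x₁, x₂, x₃, y₁, x₁, y₃} : Finset V) ⊆ {x₁, x₂, x₃, y₁, y₃} := by
      intro a ha; simp only [Finset.mem_insert, Finset.mem_singleton] at ha ⊢; tauto
    have := (Finset.card_le_card hsub).trans (card5 x₁ x₂ x₃ y₁ y₃); omega
  · have hsub : ({x₁, x₂, x₃, y₁, y₂, x₁} : Finset V) ⊆ {x₁, x₂, x₃, y₁, y₂} := by
      intro a ha; simp only [Finset.mem_insert, Finset.mem_singleton] at ha ⊢; tauto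
    have := (Finset.card_le_card hsub).trans (card5 x₁ x₂ x₃ y₁ y₂); omega
  · have hsub : ({x₁, x₂, x₂, y₁, y₂, y₃} : Finset V) ⊆ {x₁, x₂, y₁, y₂, y₃} := by
      intro a ha; simp only [Finset.mem_insert, Finset.mem_singleton] at ha ⊢; tauto
    have := (Finset.card_le_card hsub).trans (card5 x₁ x₂ y₁ y₂ y₃); omega
  · have hsub : ({x₁, x₂, x₃, x₂, y₂, y₃} : Finset V) ⊆ {x₁, x₂, x₃, y₂, y₃} := by
      intro a ha; simp only [Finset.mem_insert, Finset.mem_singleton] at ha ⊢; tauto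
    have := (Finset.card_le_card hsub).trans (card5 x₁ x₂ x₃ y₂ y₃); omega
  · have hsub : ({x₁, x₂, x₃, y₁, x₂, y₃} : Finset V) ⊆ {x₁, x₂, x₃, y₁, y₃} := by
      intro a ha; simp only [Finset.mem_insert, Finset.mem_singleton] at ha ⊢; tauto
    have := (Finset.card_le_card hsub).trans (card5 x₁ x₂ x₃ y₁ y₃); omega
  · have hsub : ({x₁, x₂, x₃, y₁, y₂, x₂} : Finset V) ⊆ {x₁, x₂, x₃, y₁, y₂} := by
      intro a ha; simp only [Finset.mem_insert, Finset.mem_singleton] at ha ⊢; tauto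
    have := (Finset.card_le_card hsub).trans (card5 x₁ x₂ x₃ y₁ y₂); omega
  · have hsub : ({x₁, x₂, x₃, x₃, y₂, y₃} : Finset V) ⊆ {x₁, x₂, x₃, y₂, y₃} := by
      intro a ha; simp only [Finset.mem_insert, Finset.mem_singleton] at ha ⊢; tauto
    have := (Finset.card_le_card hsub).trans (card5 x₁ x₂ x₃ y₂ y₃); omega
  · have hsub : ({x₁, x₂, x₃, y₁, x₃, y₃} : Finset V) ⊆ {x₁, x₂, x₃, y₁, y₃} := by
      intro a ha; simp only [Finset.mem_insert, Finset.mem_singleton] at ha ⊢; tauto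
    have := (Finset.card_le_card hsub).trans (card5 x₁ x₂ x₃ y₁ y₃); omega
  · have hsub : ({x₁, x₂, x₃, y₁, y₂, x₃} : Finset V) ⊆ {x₁, x₂, x₃, y₁, y₂} := by
      intro a ha; simp only [Finset.mem_insert, Finset.mem_singleton] at ha ⊢; tauto
    have := (Finset.card_le_card hsub).trans (card5 x₁ x₂ x₃ y₁ y₂); omega
  · have hsub : ({x₁, x₂, x₃, y₁, y₁, y₃} : Finset V) ⊆ {x₁, x₂, x₃, y₁, y₃} := by
      intro a ha; simp only [Finset.mem_insert, Finset.mem_singleton] at ha ⊢; tauto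
    have := (Finset.card_le_card hsub).trans (card5 x₁ x₂ x₃ y₁ y₃); omega
  · have hsub : ({x₁, x₂, x₃, y₁, y₂, y₁} : Finset V) ⊆ {x₁, x₂, x₃, y₁, y₂} := by
      intro a ha; simp only [Finset.mem_insert, Finset.mem_singleton] at ha ⊢; tauto
    have := (Finset.card_le_card hsub).trans (card5 x₁ x₂ x₃ y₁ y₂); omega
  · have hsub : ({x₁, x₂, x₃, y₁, y₂, y₂} : Finset V) ⊆ {x₁, x₂, x₃, y₁, y₂} := by
      intro a ha; simp only [Finset.mem_insert, Finset.mem_singleton] at ha ⊢; tauto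
    have := (Finset.card_le_card hsub).trans (card5 x₁ x₂ x₃ y₁ y₂); omega

private lemma swap12 {V : Type*} [DecidableEq V] (a b c : V) :
    ({a, b, c} : Finset V) = {b, a, c} := by
  ext z; simp only [Finset.mem_insert, Finset.mem_singleton]; tauto

private lemma rot3 {V : Type*} [DecidableEq V] (a b c : V) :
    ({a, b, c} : Finset V) = {c, a, b} := by
  ext z; simp only [Finset.mem_insert, Finset.mem_singleton]; tauto

/-- If `{a,b,w}`, `{b,c,d}`, `{d,e,w'}` are all edges with all displayed vertices distinct,
then they form a `P³₃`. -/
private lemma pat {V : Type*} [DecidableEq V] {H : Finset (Finset V)} (hP : ¬ HasP33 H)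
    {a b c d e w w' : V}
    (h1 : ({a, b, w} : Finset V) ∈ H) (h2 : ({b, c, d} : Finset V) ∈ H)
    (h3 : ({d, e, w'} : Finset V) ∈ H)
    (hab : a ≠ b) (hac : a ≠ c) (had : a ≠ d) (hae : a ≠ e)
    (hbc : b ≠ c) (hbd : b ≠ d) (hbe : b ≠ e)
    (hcd : c ≠ d) (hce : c ≠ e) (hde : d ≠ e)
    (w1 : w ≠ a) (w2 : w ≠ b) (w3 : w ≠ c) (w4 : w ≠ d) (w5 : w ≠ e)
    (v1 : w' ≠ a) (v2 : w' ≠ b) (v3 : w' ≠ c) (v4 : w' ≠ d) (v5 : w' ≠ e)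
    (hww' : w ≠ w') : False := by
  apply hP
  refine ⟨{a, b, w}, {b, c, d}, {d, e, w'}, h1, h2, h3, ?_, ?_, ?_⟩
  · have : ({a, b, w} : Finset V) ∩ {b, c, d} = {b} := by
      ext z
      simp only [Finset.mem_inter, Finset.mem_insert, Finset.mem_singleton]
      constructor
      · rintro ⟨h1 | h1 | h1, h2 | h2 | h2⟩ <;> simp_all
      · rintro rfl; simp_all
    rw [this]; simp
  · have : ({b, c, d} : Finset V) ∩ {d, e, w'} = {d} := by
      ext z
      simp only [Finset.mem_inter, Finset.mem_insert, Finset.mem_singleton]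
      constructor
      · rintro ⟨h1 | h1 | h1, h2 | h2 | h2⟩ <;> simp_all
      · rintro rfl; simp_all
    rw [this]; simp
  · ext z
    simp only [Finset.mem_inter, Finset.mem_insert, Finset.mem_singleton,
      Finset.notMem_empty, iff_false, not_and, not_or]
    rintro (rfl | rfl | rfl) <;> simp_all [eq_comm]

theorem H_cap_T1_le_s (V : Type*) [Fintype V] [DecidableEq V]
    (H : Finset (Finset V)) (h3 : ∀ e ∈ H, e.card = 3) (hP : ¬ HasP33 H)
    (x₁ x₂ x₃ y₁ y₂ y₃ : V)
    (hdist : ({x₁, x₂, x₃, y₁, y₂, y₃} : Finset V).card = 6)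
    (hc1 : ({x₁, y₂, x₃} : Finset V) ∈ H) (hc2 : ({x₂, y₃, x₁} : Finset V) ∈ H)
    (hc3 : ({x₃, y₁, x₂} : Finset V) ∈ H)
    (hs : 3 ≤ (Finset.univ \ ({x₁, x₂, x₃, y₁, y₂, y₃} : Finset V)).card) :
    (H ∩ (((Finset.univ \ ({x₁, x₂, x₃, y₁, y₂, y₃} : Finset V)).image
        fun w => ({x₁, y₁, w} : Finset V)) ∪
      ((Finset.univ \ ({x₁, x₂, x₃, y₁, y₂, y₃} : Finset V)).image
        fun w => ({x₂, y₂, w} : Finset V)) ∪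
      ((Finset.univ \ ({x₁, x₂, x₃, y₁, y₂, y₃} : Finset V)).image
        fun w => ({x₃, y₃, w} : Finset V)))).card ≤
      (Finset.univ \ ({x₁, x₂, x₃, y₁, y₂, y₃} : Finset V)).card := by
  obtain ⟨n12, n13, n14, n15, n16, n23, n24, n25, n26, n34, n35, n36, n45, n46, n56⟩ :=
    six_distinct hdist
  set U : Finset V := {x₁, x₂, x₃, y₁, y₂, y₃} with hU
  set W : Finset V := Finset.univ \ U with hW
  have hmemW : ∀ w ∈ W, w ≠ x₁ ∧ w ≠ x₂ ∧ w ≠ x₃ ∧ w ≠ y₁ ∧ w ≠ y₂ ∧ w ≠ y₃ := by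
    intro w hw
    simp only [hW, hU, Finset.mem_sdiff, Finset.mem_univ, true_and, Finset.mem_insert,
      Finset.mem_singleton, not_or] at hw
    exact hw
  have hc3' : ({y₁, x₃, x₂} : Finset V) ∈ H := by rw [← swap12]; exact hc3
  have hc2' : ({x₁, x₂, y₃} : Finset V) ∈ H := by rw [← rot3]; exact hc2
  have hc1' : ({y₂, x₁, x₃} : Finset V) ∈ H := by rw [← swap12]; exact hc1
  -- the three key lemmas
  have k12 : ∀ w ∈ W, ∀ w' ∈ W, ({x₁, y₁, w} : Finset V) ∈ H →
      ({x₂, y₂, w'} : Finset V) ∈ H → w = w' := by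
    intro w hw w' hw' h1 h2
    obtain ⟨W1, W2, W3, W4, W5, W6⟩ := hmemW w hw
    obtain ⟨V1, V2, V3, V4, V5, V6⟩ := hmemW w' hw'
    by_contra hne
    exact pat hP h1 hc3' h2 n14 n13 n12 n15 n34.symm n24.symm n45 n23.symm n35 n25
      W1 W4 W3 W2 W5 V1 V4 V3 V2 V5 hne
  have k13 : ∀ w ∈ W, ∀ w' ∈ W, ({x₁, y₁, w} : Finset V) ∈ H →
      ({x₃, y₃, w'} : Finset V) ∈ H → w = w' := by
    intro w hw w' hw' h1 h2
    obtain ⟨W1, W2, W3, W4, W5, W6⟩ := hmemW w hw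
    obtain ⟨V1, V2, V3, V4, V5, V6⟩ := hmemW w' hw'
    by_contra hne
    have h1' : ({y₁, x₁, w} : Finset V) ∈ H := by rw [← swap12]; exact h1
    have h2' : ({y₃, x₃, w'} : Finset V) ∈ H := by rw [← swap12]; exact h2
    exact pat hP h1' hc2' h2' n14.symm n24.symm n46 n34.symm n12 n16 n13 n26 n23 n36.symm
      W4 W1 W2 W6 W3 V4 V1 V2 V6 V3 hne
  have k23 : ∀ w ∈ W, ∀ w' ∈ W, ({x₂, y₂, w} : Finset V) ∈ H →
      ({x₃, y₃, w'} : Finset V) ∈ H → w = w' := by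
    intro w hw w' hw' h1 h2
    obtain ⟨W1, W2, W3, W4, W5, W6⟩ := hmemW w hw
    obtain ⟨V1, V2, V3, V4, V5, V6⟩ := hmemW w' hw'
    by_contra hne
    exact pat hP h1 hc1' h2 n25 n12.symm n23 n26 n15.symm n35.symm n56 n13 n16 n36
      W2 W5 W1 W3 W6 V2 V5 V1 V3 V6 hne
  -- counting
  set S1 : Finset V := W.filter (fun w => ({x₁, y₁, w} : Finset V) ∈ H) with hS1
  set S2 : Finset V := W.filter (fun w => ({x₂, y₂, w} : Finset V) ∈ H) with hS2
  set S3 : Finset V := W.filter (fun w => ({x₃, y₃, w} : Finset V) ∈ H) with hS3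
  have hsub : H ∩ ((W.image fun w => ({x₁, y₁, w} : Finset V)) ∪
      (W.image fun w => ({x₂, y₂, w} : Finset V)) ∪
      (W.image fun w => ({x₃, y₃, w} : Finset V))) ⊆
      (S1.image fun w => ({x₁, y₁, w} : Finset V)) ∪
      (S2.image fun w => ({x₂, y₂, w} : Finset V)) ∪
      (S3.image fun w => ({x₃, y₃, w} : Finset V)) := by
    intro e he
    simp only [Finset.mem_inter, Finset.mem_union, Finset.mem_image, hS1, hS2, hS3,
      Finset.mem_filter] at he ⊢
    obtain ⟨heH, (⟨w, hw, rfl⟩ | ⟨w, hw, rfl⟩) | ⟨w, hw, rfl⟩⟩ := he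
    · exact Or.inl (Or.inl ⟨w, ⟨hw, heH⟩, rfl⟩)
    · exact Or.inl (Or.inr ⟨w, ⟨hw, heH⟩, rfl⟩)
    · exact Or.inr ⟨w, ⟨hw, heH⟩, rfl⟩
  have hcard : (H ∩ ((W.image fun w => ({x₁, y₁, w} : Finset V)) ∪
      (W.image fun w => ({x₂, y₂, w} : Finset V)) ∪
      (W.image fun w => ({x₃, y₃, w} : Finset V)))).card ≤ S1.card + S2.card + S3.card := by
    refine (Finset.card_le_card hsub).trans ?_
    refine (Finset.card_union_le _ _).trans ?_
    have h1 := Finset.card_union_le (S1.image fun w => ({x₁, y₁, w} : Finset V))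
      (S2.image fun w => ({x₂, y₂, w} : Finset V))
    have i1 := Finset.card_image_le (s := S1) (f := fun w => ({x₁, y₁, w} : Finset V))
    have i2 := Finset.card_image_le (s := S2) (f := fun w => ({x₂, y₂, w} : Finset V))
    have i3 := Finset.card_image_le (s := S3) (f := fun w => ({x₃, y₃, w} : Finset V))
    omega
  have m1 : ∀ w ∈ S1, w ∈ W ∧ ({x₁, y₁, w} : Finset V) ∈ H := by
    intro w hw; simpa [hS1, Finset.mem_filter] using hw
  have m2 : ∀ w ∈ S2, w ∈ W ∧ ({x₂, y₂, w} : Finset V) ∈ H := by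
    intro w hw; simpa [hS2, Finset.mem_filter] using hw
  have m3 : ∀ w ∈ S3, w ∈ W ∧ ({x₃, y₃, w} : Finset V) ∈ H := by
    intro w hw; simpa [hS3, Finset.mem_filter] using hw
  have hS1W : S1 ⊆ W := Finset.filter_subset _ _
  have hS2W : S2 ⊆ W := Finset.filter_subset _ _
  have hS3W : S3 ⊆ W := Finset.filter_subset _ _
  by_cases h1 : S1.Nonempty
  · obtain ⟨a1, ha1⟩ := h1
    by_cases h2 : S2.Nonempty
    · obtain ⟨a2, ha2⟩ := h2
      have c1 : S1.card ≤ 1 := Finset.card_le_one.mpr (fun a ha b hb =>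
        (k12 a (m1 a ha).1 a2 (m2 a2 ha2).1 (m1 a ha).2 (m2 a2 ha2).2).trans
        (k12 b (m1 b hb).1 a2 (m2 a2 ha2).1 (m1 b hb).2 (m2 a2 ha2).2).symm)
      have c2 : S2.card ≤ 1 := Finset.card_le_one.mpr (fun a ha b hb =>
        (k12 a1 (m1 a1 ha1).1 a (m2 a ha).1 (m1 a1 ha1).2 (m2 a ha).2).symm.trans
        (k12 a1 (m1 a1 ha1).1 b (m2 b hb).1 (m1 a1 ha1).2 (m2 b hb).2))
      have c3 : S3.card ≤ 1 := Finset.card_le_one.mpr (fun a ha b hb =>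
        (k13 a1 (m1 a1 ha1).1 a (m3 a ha).1 (m1 a1 ha1).2 (m3 a ha).2).symm.trans
        (k13 a1 (m1 a1 ha1).1 b (m3 b hb).1 (m1 a1 ha1).2 (m3 b hb).2))
      omega
    · have c2 : S2.card = 0 := by
        simp [Finset.not_nonempty_iff_eq_empty.mp h2]
      by_cases h3' : S3.Nonempty
      · obtain ⟨a3, ha3⟩ := h3'
        have c1 : S1.card ≤ 1 := Finset.card_le_one.mpr (fun a ha b hb =>
          (k13 a (m1 a ha).1 a3 (m3 a3 ha3).1 (m1 a ha).2 (m3 a3 ha3).2).trans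
          (k13 b (m1 b hb).1 a3 (m3 a3 ha3).1 (m1 b hb).2 (m3 a3 ha3).2).symm)
        have c3 : S3.card ≤ 1 := Finset.card_le_one.mpr (fun a ha b hb =>
          (k13 a1 (m1 a1 ha1).1 a (m3 a ha).1 (m1 a1 ha1).2 (m3 a ha).2).symm.trans
          (k13 a1 (m1 a1 ha1).1 b (m3 b hb).1 (m1 a1 ha1).2 (m3 b hb).2))
        omega
      · have c3 : S3.card = 0 := by
          simp [Finset.not_nonempty_iff_eq_empty.mp h3']
        have c1 : S1.card ≤ W.card := Finset.card_le_card hS1W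
        omega
  · have c1 : S1.card = 0 := by
      simp [Finset.not_nonempty_iff_eq_empty.mp h1]
    by_cases h2 : S2.Nonempty
    · obtain ⟨a2, ha2⟩ := h2
      by_cases h3' : S3.Nonempty
      · obtain ⟨a3, ha3⟩ := h3'
        have c2 : S2.card ≤ 1 := Finset.card_le_one.mpr (fun a ha b hb =>
          (k23 a (m2 a ha).1 a3 (m3 a3 ha3).1 (m2 a ha).2 (m3 a3 ha3).2).trans
          (k23 b (m2 b hb).1 a3 (m3 a3 ha3).1 (m2 b hb).2 (m3 a3 ha3).2).symm)
        have c3 : S3.card ≤ 1 := Finset.card_le_one.mpr (fun a ha b hb =>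
          (k23 a2 (m2 a2 ha2).1 a (m3 a ha).1 (m2 a2 ha2).2 (m3 a ha).2).symm.trans
          (k23 a2 (m2 a2 ha2).1 b (m3 b hb).1 (m2 a2 ha2).2 (m3 b hb).2))
        omega
      · have c3 : S3.card = 0 := by
          simp [Finset.not_nonempty_iff_eq_empty.mp h3']
        have c2 : S2.card ≤ W.card := Finset.card_le_card hS2W
        omega
    · have c2 : S2.card = 0 := by
        simp [Finset.not_nonempty_iff_eq_empty.mp h2]
      have c3 : S3.card ≤ W.card := Finset.card_le_card hS3W
      omega
end

section
/- Let H be a P³₃-free 3-graph containing a triangle C on U, with W = V(H)\U of size s ≥ 2. With T = T₁ ∪ T₂ where T₁ = {{xᵢ,yᵢ,w} : i, w∈W} and T₂ = {{xᵢ,xⱼ,w} : i<j, w∈W}, the number of edges of H belonging to T is at most 3s. -/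
lemma pair_bound' {V : Type*} [DecidableEq V] (W : Finset V) (hW : 2 ≤ W.card)
    (H : Finset (Finset V)) (f g : V → Finset V)
    (hbad : ∀ a ∈ W, ∀ b ∈ W, a ≠ b → f a ∈ H → g b ∈ H → False) :
    (H ∩ (W.image f ∪ W.image g)).card ≤ W.card := by
  rw [Finset.inter_union_distrib_left]
  by_cases hF : (H ∩ W.image f).Nonempty
  · by_cases hG : (H ∩ W.image g).Nonempty
    · obtain ⟨e₁, he₁⟩ := hF
      obtain ⟨e₂, he₂⟩ := hG
      rw [Finset.mem_inter] at he₁ he₂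
      obtain ⟨a, ha, rfl⟩ := Finset.mem_image.1 he₁.2
      obtain ⟨b, hb, rfl⟩ := Finset.mem_image.1 he₂.2
      have hab : a = b := by
        by_contra h; exact hbad a ha b hb h he₁.1 he₂.1
      subst hab
      have hsub : (H ∩ W.image f) ∪ (H ∩ W.image g) ⊆ {f a, g a} := by
        intro e he
        rcases Finset.mem_union.1 he with he | he <;> rw [Finset.mem_inter] at he
        · obtain ⟨c, hc, rfl⟩ := Finset.mem_image.1 he.2
          rcases eq_or_ne c a with rfl | hne
          · simp
          · exact absurd (hbad c hc a ha hne he.1 he₂.1) (by simp)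
        · obtain ⟨c, hc, rfl⟩ := Finset.mem_image.1 he.2
          rcases eq_or_ne c a with rfl | hne
          · simp
          · exact absurd (hbad a ha c hc (Ne.symm hne) he₁.1 he.1) (by simp)
      calc ((H ∩ W.image f) ∪ (H ∩ W.image g)).card ≤ ({f a, g a} : Finset (Finset V)).card :=
            Finset.card_le_card hsub
        _ ≤ 2 := Finset.card_insert_le _ _ |>.trans (by simp)
        _ ≤ W.card := hW
    · rw [Finset.not_nonempty_iff_eq_empty] at hG
      rw [hG, Finset.union_empty]
      exact (Finset.card_le_card Finset.inter_subset_right).trans Finset.card_image_le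
  · rw [Finset.not_nonempty_iff_eq_empty] at hF
    rw [hF, Finset.empty_union]
    exact (Finset.card_le_card Finset.inter_subset_right).trans Finset.card_image_le

lemma inter3_last {V : Type*} [DecidableEq V] (a b c d e : V)
    (hbd : b ≠ d) (hbe : b ≠ e) (hcd : c ≠ d) (hce : c ≠ e) :
    ({a, b, c} : Finset V) ∩ {d, e, a} = {a} := by
  ext z
  simp only [Finset.mem_inter, Finset.mem_insert, Finset.mem_singleton]
  constructor
  · rintro ⟨rfl | rfl | rfl, h | h | h⟩ <;> tauto
  · rintro rfl; tauto

lemma inter3_first {V : Type*} [DecidableEq V] (a b c d e : V)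
    (hbd : b ≠ d) (hbe : b ≠ e) (hcd : c ≠ d) (hce : c ≠ e) :
    ({a, b, c} : Finset V) ∩ {a, d, e} = {a} := by
  ext z
  simp only [Finset.mem_inter, Finset.mem_insert, Finset.mem_singleton]
  constructor
  · rintro ⟨rfl | rfl | rfl, h | h | h⟩ <;> tauto
  · rintro rfl; tauto

lemma inter3_mid {V : Type*} [DecidableEq V] (a b c d e : V)
    (hbd : b ≠ d) (hbe : b ≠ e) (hcd : c ≠ d) (hce : c ≠ e) :
    ({a, b, c} : Finset V) ∩ {d, a, e} = {a} := by
  ext z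
  simp only [Finset.mem_inter, Finset.mem_insert, Finset.mem_singleton]
  constructor
  · rintro ⟨rfl | rfl | rfl, h | h | h⟩ <;> tauto
  · rintro rfl; tauto

lemma inter3_empty {V : Type*} [DecidableEq V] (a b c d e f : V)
    (h1 : a ≠ d) (h2 : a ≠ e) (h3 : a ≠ f) (h4 : b ≠ d) (h5 : b ≠ e) (h6 : b ≠ f)
    (h7 : c ≠ d) (h8 : c ≠ e) (h9 : c ≠ f) :
    ({a, b, c} : Finset V) ∩ {d, e, f} = ∅ := by
  ext z
  simp only [Finset.mem_inter, Finset.mem_insert, Finset.mem_singleton,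
    Finset.notMem_empty, iff_false, not_and]
  rintro (rfl | rfl | rfl) <;> rintro (h | h | h) <;> tauto


theorem H_cap_T_le_3s (V : Type*) [Fintype V] [DecidableEq V]
    (H : Finset (Finset V)) (h3 : ∀ e ∈ H, e.card = 3) (hP : ¬ HasP33 H)
    (x₁ x₂ x₃ y₁ y₂ y₃ : V)
    (hdist : ({x₁, x₂, x₃, y₁, y₂, y₃} : Finset V).card = 6)
    (hc1 : ({x₁, y₂, x₃} : Finset V) ∈ H) (hc2 : ({x₂, y₃, x₁} : Finset V) ∈ H)
    (hc3 : ({x₃, y₁, x₂} : Finset V) ∈ H)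
    (hs : 2 ≤ (Finset.univ \ ({x₁, x₂, x₃, y₁, y₂, y₃} : Finset V)).card) :
    (H ∩ (((Finset.univ \ ({x₁, x₂, x₃, y₁, y₂, y₃} : Finset V)).image
        fun w => ({x₁, y₁, w} : Finset V)) ∪
      ((Finset.univ \ ({x₁, x₂, x₃, y₁, y₂, y₃} : Finset V)).image
        fun w => ({x₂, y₂, w} : Finset V)) ∪
      ((Finset.univ \ ({x₁, x₂, x₃, y₁, y₂, y₃} : Finset V)).image
        fun w => ({x₃, y₃, w} : Finset V)) ∪
      ((Finset.univ \ ({x₁, x₂, x₃, y₁, y₂, y₃} : Finset V)).image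
        fun w => ({x₁, x₂, w} : Finset V)) ∪
      ((Finset.univ \ ({x₁, x₂, x₃, y₁, y₂, y₃} : Finset V)).image
        fun w => ({x₁, x₃, w} : Finset V)) ∪
      ((Finset.univ \ ({x₁, x₂, x₃, y₁, y₂, y₃} : Finset V)).image
        fun w => ({x₂, x₃, w} : Finset V)))).card ≤
      3 * (Finset.univ \ ({x₁, x₂, x₃, y₁, y₂, y₃} : Finset V)).card := by
  set W : Finset V := Finset.univ \ ({x₁, x₂, x₃, y₁, y₂, y₃} : Finset V) with hWdef
  -- pairwise distinctness
  have hl : ([x₁,x₂,x₃,y₁,y₂,y₃] : List V).Nodup := by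
    have h1 : ([x₁,x₂,x₃,y₁,y₂,y₃] : List V).dedup.length = 6 := by
      rw [← List.card_toFinset]; simpa using hdist
    rw [← List.dedup_eq_self]
    exact (List.dedup_sublist _).eq_of_length (by simp [h1])
  simp only [List.nodup_cons, List.mem_cons, List.not_mem_nil, or_false, not_or,
    List.nodup_nil, and_true, List.mem_singleton] at hl
  obtain ⟨⟨h12, h13, h14, h15, h16⟩, ⟨h23, h24, h25, h26⟩, ⟨h34, h35, h36⟩, ⟨h45, h46⟩, h56, -⟩ := hl
  have hWmem : ∀ a ∈ W, a ≠ x₁ ∧ a ≠ x₂ ∧ a ≠ x₃ ∧ a ≠ y₁ ∧ a ≠ y₂ ∧ a ≠ y₃ := by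
    intro a ha
    rw [hWdef, Finset.mem_sdiff] at ha
    have := ha.2
    simp only [Finset.mem_insert, Finset.mem_singleton, not_or] at this
    exact this
  -- the three incompatibility facts
  have hbadA : ∀ a ∈ W, ∀ b ∈ W, a ≠ b →
      ({x₁, y₁, a} : Finset V) ∈ H → ({x₂, x₃, b} : Finset V) ∈ H → False := by
    intro a ha b hb hab hA hB
    obtain ⟨ha1, ha2, ha3, ha4, ha5, ha6⟩ := hWmem a ha
    obtain ⟨hb1, hb2, hb3, hb4, hb5, hb6⟩ := hWmem b hb
    apply hP
    refine ⟨({x₁, y₁, a} : Finset V), ({x₂, y₃, x₁} : Finset V), ({x₂, x₃, b} : Finset V), hA, hc2, hB, ?_, ?_, ?_⟩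
    · rw [inter3_last x₁ y₁ a x₂ y₃ (Ne.symm h24) h46 ha2 ha6]; simp
    · rw [inter3_first x₂ y₃ x₁ x₃ b (Ne.symm h36) (Ne.symm hb6) h13 (Ne.symm hb1)]; simp
    · exact inter3_empty x₁ y₁ a x₂ x₃ b h12 h13 (Ne.symm hb1) (Ne.symm h24) (Ne.symm h34) (Ne.symm hb4) ha2 ha3 hab
  have hbadB : ∀ a ∈ W, ∀ b ∈ W, a ≠ b →
      ({x₂, y₂, a} : Finset V) ∈ H → ({x₁, x₃, b} : Finset V) ∈ H → False := by
    intro a ha b hb hab hA hB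
    obtain ⟨ha1, ha2, ha3, ha4, ha5, ha6⟩ := hWmem a ha
    obtain ⟨hb1, hb2, hb3, hb4, hb5, hb6⟩ := hWmem b hb
    apply hP
    refine ⟨({x₂, y₂, a} : Finset V), ({x₃, y₁, x₂} : Finset V), ({x₁, x₃, b} : Finset V), hA, hc3, hB, ?_, ?_, ?_⟩
    · rw [inter3_last x₂ y₂ a x₃ y₁ (Ne.symm h35) (Ne.symm h45) ha3 ha4]; simp
    · rw [inter3_mid x₃ y₁ x₂ x₁ b (Ne.symm h14) (Ne.symm hb4) (Ne.symm h12) (Ne.symm hb2)]; simp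
    · exact inter3_empty x₂ y₂ a x₁ x₃ b (Ne.symm h12) h23 (Ne.symm hb2) (Ne.symm h15) (Ne.symm h35) (Ne.symm hb5) ha1 ha3 hab
  have hbadC : ∀ a ∈ W, ∀ b ∈ W, a ≠ b →
      ({x₃, y₃, a} : Finset V) ∈ H → ({x₁, x₂, b} : Finset V) ∈ H → False := by
    intro a ha b hb hab hA hB
    obtain ⟨ha1, ha2, ha3, ha4, ha5, ha6⟩ := hWmem a ha
    obtain ⟨hb1, hb2, hb3, hb4, hb5, hb6⟩ := hWmem b hb
    apply hP
    refine ⟨({x₃, y₃, a} : Finset V), ({x₁, y₂, x₃} : Finset V), ({x₁, x₂, b} : Finset V), hA, hc1, hB, ?_, ?_, ?_⟩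
    · rw [inter3_last x₃ y₃ a x₁ y₂ (Ne.symm h16) (Ne.symm h56) ha1 ha5]; simp
    · rw [inter3_first x₁ y₂ x₃ x₂ b (Ne.symm h25) (Ne.symm hb5) (Ne.symm h23) (Ne.symm hb3)]; simp
    · exact inter3_empty x₃ y₃ a x₁ x₂ b (Ne.symm h13) (Ne.symm h23) (Ne.symm hb3) (Ne.symm h16) (Ne.symm h26) (Ne.symm hb6) ha1 ha2 hab
  -- assemble
  have bA := pair_bound' W hs H (fun w => ({x₁, y₁, w} : Finset V))
    (fun w => ({x₂, x₃, w} : Finset V)) hbadA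
  have bB := pair_bound' W hs H (fun w => ({x₂, y₂, w} : Finset V))
    (fun w => ({x₁, x₃, w} : Finset V)) hbadB
  have bC := pair_bound' W hs H (fun w => ({x₃, y₃, w} : Finset V))
    (fun w => ({x₁, x₂, w} : Finset V)) hbadC
  have hsub : H ∩ ((W.image fun w => ({x₁, y₁, w} : Finset V)) ∪
      (W.image fun w => ({x₂, y₂, w} : Finset V)) ∪
      (W.image fun w => ({x₃, y₃, w} : Finset V)) ∪
      (W.image fun w => ({x₁, x₂, w} : Finset V)) ∪
      (W.image fun w => ({x₁, x₃, w} : Finset V)) ∪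
      (W.image fun w => ({x₂, x₃, w} : Finset V))) ⊆
      (H ∩ ((W.image fun w => ({x₁, y₁, w} : Finset V)) ∪
        (W.image fun w => ({x₂, x₃, w} : Finset V)))) ∪
      ((H ∩ ((W.image fun w => ({x₂, y₂, w} : Finset V)) ∪
        (W.image fun w => ({x₁, x₃, w} : Finset V)))) ∪
      (H ∩ ((W.image fun w => ({x₃, y₃, w} : Finset V)) ∪
        (W.image fun w => ({x₁, x₂, w} : Finset V))))) := by
    intro e he
    rw [Finset.mem_inter] at he
    obtain ⟨heH, heU⟩ := he
    simp only [Finset.mem_union] at heU ⊢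
    simp only [Finset.mem_inter, Finset.mem_union]
    rcases heU with ((((h | h) | h) | h) | h) | h
    · exact Or.inl ⟨heH, Or.inl h⟩
    · exact Or.inr (Or.inl ⟨heH, Or.inl h⟩)
    · exact Or.inr (Or.inr ⟨heH, Or.inl h⟩)
    · exact Or.inr (Or.inr ⟨heH, Or.inr h⟩)
    · exact Or.inr (Or.inl ⟨heH, Or.inr h⟩)
    · exact Or.inl ⟨heH, Or.inr h⟩
  calc _ ≤ ((H ∩ ((W.image fun w => ({x₁, y₁, w} : Finset V)) ∪
        (W.image fun w => ({x₂, x₃, w} : Finset V)))) ∪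
      ((H ∩ ((W.image fun w => ({x₂, y₂, w} : Finset V)) ∪
        (W.image fun w => ({x₁, x₃, w} : Finset V)))) ∪
      (H ∩ ((W.image fun w => ({x₃, y₃, w} : Finset V)) ∪
        (W.image fun w => ({x₁, x₂, w} : Finset V)))))).card := Finset.card_le_card hsub
    _ ≤ _ := by
      have u1 := Finset.card_union_le
        (H ∩ ((W.image fun w => ({x₁, y₁, w} : Finset V)) ∪
          (W.image fun w => ({x₂, x₃, w} : Finset V))))
        ((H ∩ ((W.image fun w => ({x₂, y₂, w} : Finset V)) ∪
          (W.image fun w => ({x₁, x₃, w} : Finset V)))) ∪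
        (H ∩ ((W.image fun w => ({x₃, y₃, w} : Finset V)) ∪
          (W.image fun w => ({x₁, x₂, w} : Finset V)))))
      have u2 := Finset.card_union_le
        (H ∩ ((W.image fun w => ({x₂, y₂, w} : Finset V)) ∪
          (W.image fun w => ({x₁, x₃, w} : Finset V))))
        (H ∩ ((W.image fun w => ({x₃, y₃, w} : Finset V)) ∪
          (W.image fun w => ({x₁, x₂, w} : Finset V))))
      omega
end

section
/- Let H be a P³₃-free 3-graph containing a triangle C on U, W = V(H)\U with |W| = s ≥ 2. Then |H[U]| + |H(U,W)| ≤ 14 + 3s, where H[U] are the edges inside U and H(U,W) the edges meeting both U and W. -/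
/-- `H` contains a copy of the 3-uniform triangle `C³₃`. -/
def HasC33 {V : Type*} [DecidableEq V] (H : Finset (Finset V)) : Prop :=
  ∃ a b c d e f : V, ({a, b, c, d, e, f} : Finset V).card = 6 ∧
    ({a, b, c} : Finset V) ∈ H ∧ ({c, d, e} : Finset V) ∈ H ∧ ({e, f, a} : Finset V) ∈ H

set_option linter.dupNamespace false

namespace CorAux

variable {V : Type*} [DecidableEq V]

def emb (φ : Fin 6 → V) (s : Finset (Fin 6)) : Finset V := s.image φ

def T3 : Fin 3 → Finset (Fin 6)
  | 0 => {0,2,4} | 1 => {0,1,5} | 2 => {1,2,3}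

def AP : Finset (Finset (Fin 6)) := {{0,1},{0,2},{1,2},{0,3},{1,4},{2,5}}

def MP : Finset (Finset (Fin 6)) := {{0,3},{1,4},{2,5}}


def phi (x₁ x₂ x₃ y₁ y₂ y₃ : V) : Fin 6 → V
  | 0 => x₁ | 1 => x₂ | 2 => x₃ | 3 => y₁ | 4 => y₂ | 5 => y₃

variable {φ : Fin 6 → V}

lemma emb_inter (hφ : Function.Injective φ) (s t : Finset (Fin 6)) :
    emb φ s ∩ emb φ t = emb φ (s ∩ t) := (Finset.image_inter s t hφ).symm

lemma emb_card (hφ : Function.Injective φ) (s : Finset (Fin 6)) :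
    (emb φ s).card = s.card := Finset.card_image_of_injective _ hφ

lemma emb_subset (s : Finset (Fin 6)) : emb φ s ⊆ emb φ Finset.univ :=
  Finset.image_subset_image (Finset.subset_univ s)

lemma not_mem_emb {w : V} (hw : w ∉ emb φ Finset.univ) (s : Finset (Fin 6)) :
    w ∉ emb φ s := fun h => hw (emb_subset s h)

lemma emb_inter_insert (hφ : Function.Injective φ) {w : V} (hw : w ∉ emb φ Finset.univ)
    (s t : Finset (Fin 6)) : emb φ s ∩ insert w (emb φ t) = emb φ (s ∩ t) := by
  rw [Finset.inter_insert_of_notMem (not_mem_emb hw s), emb_inter hφ]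

lemma insert_inter_emb (hφ : Function.Injective φ) {w : V} (hw : w ∉ emb φ Finset.univ)
    (s t : Finset (Fin 6)) : insert w (emb φ s) ∩ emb φ t = emb φ (s ∩ t) := by
  rw [Finset.insert_inter_of_notMem (not_mem_emb hw t), emb_inter hφ]

lemma insert_inter_insert (hφ : Function.Injective φ) {w w' : V}
    (hw : w ∉ emb φ Finset.univ) (hw' : w' ∉ emb φ Finset.univ) (hne : w ≠ w')
    (s t : Finset (Fin 6)) :
    insert w (emb φ s) ∩ insert w' (emb φ t) = emb φ (s ∩ t) := by
  rw [Finset.insert_inter_of_notMem, emb_inter_insert hφ hw']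
  simp only [Finset.mem_insert, not_or]
  exact ⟨hne, not_mem_emb hw t⟩

lemma emb_empty_iff (hφ : Function.Injective φ) (s : Finset (Fin 6)) :
    emb φ s = ∅ ↔ s = ∅ := by
  constructor
  · intro h; rwa [← Finset.card_eq_zero, emb_card hφ, Finset.card_eq_zero] at h
  · rintro rfl; exact Finset.image_empty φ

lemma pair_bd {α : Type*} [DecidableEq α] {J : Finset α} {a b : α}
    (h : ¬(a ∈ J ∧ b ∈ J)) : (J ∩ ({a, b} : Finset α)).card ≤ 1 := by
  by_cases ha : a ∈ J
  · have hb : b ∉ J := fun hb => h ⟨ha, hb⟩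
    have hsub : J ∩ ({a, b} : Finset α) ⊆ {a} := by
      intro x hx
      simp only [Finset.mem_inter, Finset.mem_insert, Finset.mem_singleton] at hx ⊢
      rcases hx with ⟨hxJ, rfl | rfl⟩
      · rfl
      · exact absurd hxJ hb
    calc (J ∩ ({a, b} : Finset α)).card ≤ ({a} : Finset α).card := Finset.card_le_card hsub
      _ = 1 := Finset.card_singleton a
  · have hsub : J ∩ ({a, b} : Finset α) ⊆ {b} := by
      intro x hx
      simp only [Finset.mem_inter, Finset.mem_insert, Finset.mem_singleton] at hx ⊢
      rcases hx with ⟨hxJ, rfl | rfl⟩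
      · exact absurd hxJ ha
      · rfl
    calc (J ∩ ({a, b} : Finset α)).card ≤ ({b} : Finset α).card := Finset.card_le_card hsub
      _ = 1 := Finset.card_singleton b

lemma single_bd {α : Type*} [DecidableEq α] (J : Finset α) (a : α) :
    (J ∩ ({a} : Finset α)).card ≤ 1 :=
  le_trans (Finset.card_le_card Finset.inter_subset_right) (Finset.card_singleton a).le

lemma count_blocks {α : Type*} [DecidableEq α] (J : Finset α) (B : Fin 11 → Finset α)
    (hcov : ∀ s ∈ J, ∃ k, s ∈ B k) (hbd : ∀ k, (J ∩ B k).card ≤ 1) : J.card ≤ 11 := by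
  have hsub : J ⊆ Finset.univ.biUnion (fun k => J ∩ B k) := by
    intro s hs
    obtain ⟨k, hk⟩ := hcov s hs
    exact Finset.mem_biUnion.2 ⟨k, Finset.mem_univ k, Finset.mem_inter.2 ⟨hs, hk⟩⟩
  calc J.card ≤ (Finset.univ.biUnion (fun k => J ∩ B k)).card := Finset.card_le_card hsub
    _ ≤ ∑ k : Fin 11, (J ∩ B k).card := Finset.card_biUnion_le
    _ ≤ ∑ _k : Fin 11, 1 := Finset.sum_le_sum (fun k _ => hbd k)
    _ = 11 := by simp

variable {H : Finset (Finset V)}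

lemma shape_fact : ∀ s : Finset (Fin 6), (s.card = 1 ∨ (s.card = 2 ∧ s ∉ AP)) →
    ∃ j k : Fin 3, (s ∩ T3 j).card = 1 ∧ s ∩ T3 k = ∅ ∧ (T3 j ∩ T3 k).card = 1 := by decide

lemma disj_fact : ∀ q ∈ AP, ∀ q' ∈ AP, q ∩ q' = ∅ →
    ∃ j : Fin 3, (q ∩ T3 j).card = 1 ∧ (T3 j ∩ q').card = 1 := by decide

lemma inside_bound (hφ : Function.Injective φ) (hP : ¬ HasP33 H)
    (ht1 : emb φ {0,2,4} ∈ H) (ht2 : emb φ {0,1,5} ∈ H) (ht3 : emb φ {1,2,3} ∈ H)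
    {w : V} (hw : w ∉ emb φ Finset.univ) {q : Finset (Fin 6)} (hq : q ∈ AP)
    (hf : insert w (emb φ q) ∈ H) :
    ((Finset.univ.powersetCard 3).filter (fun s => emb φ s ∈ H)).card ≤ 11 := by
  simp only [AP, Finset.mem_insert, Finset.mem_singleton] at hq
  rcases hq with rfl | rfl | rfl | rfl | rfl | rfl
  · have F1 : emb φ {0,4,5} ∉ H := fun hg => hP ⟨emb φ {1,2,3}, insert w (emb φ {0,1}), emb φ {0,4,5}, ht3, hf, hg, (by rw [emb_inter_insert hφ hw, emb_card hφ]; decide), (by rw [insert_inter_emb hφ hw, emb_card hφ]; decide), (by rw [emb_inter hφ, emb_empty_iff hφ]; decide)⟩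
    have F2 : emb φ {1,3,5} ∉ H := fun hg => hP ⟨emb φ {0,2,4}, insert w (emb φ {0,1}), emb φ {1,3,5}, ht1, hf, hg, (by rw [emb_inter_insert hφ hw, emb_card hφ]; decide), (by rw [insert_inter_emb hφ hw, emb_card hφ]; decide), (by rw [emb_inter hφ, emb_empty_iff hφ]; decide)⟩
    have F3 : emb φ {2,3,5} ∉ H := fun hg => hP ⟨insert w (emb φ {0,1}), emb φ {0,2,4}, emb φ {2,3,5}, hf, ht1, hg, (by rw [insert_inter_emb hφ hw, emb_card hφ]; decide), (by rw [emb_inter hφ, emb_card hφ]; decide), (by rw [insert_inter_emb hφ hw, emb_empty_iff hφ]; decide)⟩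
    have F4 : emb φ {2,4,5} ∉ H := fun hg => hP ⟨insert w (emb φ {0,1}), emb φ {1,2,3}, emb φ {2,4,5}, hf, ht3, hg, (by rw [insert_inter_emb hφ hw, emb_card hφ]; decide), (by rw [emb_inter hφ, emb_card hφ]; decide), (by rw [insert_inter_emb hφ hw, emb_empty_iff hφ]; decide)⟩
    have F5 : emb φ {3,4,5} ∉ H := fun hg => hP ⟨insert w (emb φ {0,1}), emb φ {0,2,4}, emb φ {3,4,5}, hf, ht1, hg, (by rw [insert_inter_emb hφ hw, emb_card hφ]; decide), (by rw [emb_inter hφ, emb_card hφ]; decide), (by rw [insert_inter_emb hφ hw, emb_empty_iff hφ]; decide)⟩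
    have P1 : ¬(emb φ {0,2,3} ∈ H ∧ emb φ {1,4,5} ∈ H) := fun ⟨hg, hh⟩ => hP ⟨emb φ {0,2,3}, insert w (emb φ {0,1}), emb φ {1,4,5}, hg, hf, hh, (by rw [emb_inter_insert hφ hw, emb_card hφ]; decide), (by rw [insert_inter_emb hφ hw, emb_card hφ]; decide), (by rw [emb_inter hφ, emb_empty_iff hφ]; decide)⟩
    have P2 : ¬(emb φ {0,2,5} ∈ H ∧ emb φ {1,3,4} ∈ H) := fun ⟨hg, hh⟩ => hP ⟨emb φ {0,2,5}, insert w (emb φ {0,1}), emb φ {1,3,4}, hg, hf, hh, (by rw [emb_inter_insert hφ hw, emb_card hφ]; decide), (by rw [insert_inter_emb hφ hw, emb_card hφ]; decide), (by rw [emb_inter hφ, emb_empty_iff hφ]; decide)⟩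
    have P3 : ¬(emb φ {0,3,4} ∈ H ∧ emb φ {1,2,5} ∈ H) := fun ⟨hg, hh⟩ => hP ⟨emb φ {0,3,4}, insert w (emb φ {0,1}), emb φ {1,2,5}, hg, hf, hh, (by rw [emb_inter_insert hφ hw, emb_card hφ]; decide), (by rw [insert_inter_emb hφ hw, emb_card hφ]; decide), (by rw [emb_inter hφ, emb_empty_iff hφ]; decide)⟩
    have P4 : ¬(emb φ {0,3,5} ∈ H ∧ emb φ {1,2,4} ∈ H) := fun ⟨hg, hh⟩ => hP ⟨emb φ {0,3,5}, insert w (emb φ {0,1}), emb φ {1,2,4}, hg, hf, hh, (by rw [emb_inter_insert hφ hw, emb_card hφ]; decide), (by rw [insert_inter_emb hφ hw, emb_card hφ]; decide), (by rw [emb_inter hφ, emb_empty_iff hφ]; decide)⟩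
    refine count_blocks _ (![{({0,2,4} : Finset (Fin 6))}, {({0,1,5} : Finset (Fin 6))}, {({1,2,3} : Finset (Fin 6))}, {{0,2,3},{1,4,5}}, {{0,2,5},{1,3,4}}, {{0,3,4},{1,2,5}}, {{0,3,5},{1,2,4}}, {{0,1,2}}, {{0,1,3}}, {{0,1,4}}, {{2,3,4}}]) ?_ ?_
    · intro s hs
      have h20 : s ∈ Finset.univ.powersetCard 3 := (Finset.mem_filter.1 hs).1
      have hsH : emb φ s ∈ H := (Finset.mem_filter.1 hs).2
      have hn1 : s ≠ {0,4,5} := fun h => F1 (h ▸ hsH)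
      have hn2 : s ≠ {1,3,5} := fun h => F2 (h ▸ hsH)
      have hn3 : s ≠ {2,3,5} := fun h => F3 (h ▸ hsH)
      have hn4 : s ≠ {2,4,5} := fun h => F4 (h ▸ hsH)
      have hn5 : s ≠ {3,4,5} := fun h => F5 (h ▸ hsH)
      exact (by decide : ∀ s : Finset (Fin 6), s ∈ Finset.univ.powersetCard 3 → s ≠ {0,4,5} → s ≠ {1,3,5} → s ≠ {2,3,5} → s ≠ {2,4,5} → s ≠ {3,4,5} → ∃ k : Fin 11, s ∈ (![{({0,2,4} : Finset (Fin 6))}, {({0,1,5} : Finset (Fin 6))}, {({1,2,3} : Finset (Fin 6))}, {{0,2,3},{1,4,5}}, {{0,2,5},{1,3,4}}, {{0,3,4},{1,2,5}}, {{0,3,5},{1,2,4}}, {{0,1,2}}, {{0,1,3}}, {{0,1,4}}, {{2,3,4}}] : Fin 11 → Finset (Finset (Fin 6))) k) s h20 hn1 hn2 hn3 hn4 hn5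
    · intro k
      fin_cases k
      · exact single_bd _ _
      · exact single_bd _ _
      · exact single_bd _ _
      · exact pair_bd (fun ⟨h1, h2⟩ => P1 ⟨(Finset.mem_filter.1 h1).2, (Finset.mem_filter.1 h2).2⟩)
      · exact pair_bd (fun ⟨h1, h2⟩ => P2 ⟨(Finset.mem_filter.1 h1).2, (Finset.mem_filter.1 h2).2⟩)
      · exact pair_bd (fun ⟨h1, h2⟩ => P3 ⟨(Finset.mem_filter.1 h1).2, (Finset.mem_filter.1 h2).2⟩)
      · exact pair_bd (fun ⟨h1, h2⟩ => P4 ⟨(Finset.mem_filter.1 h1).2, (Finset.mem_filter.1 h2).2⟩)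
      · exact single_bd _ _
      · exact single_bd _ _
      · exact single_bd _ _
      · exact single_bd _ _
  · have F1 : emb φ {0,4,5} ∉ H := fun hg => hP ⟨emb φ {1,2,3}, insert w (emb φ {0,2}), emb φ {0,4,5}, ht3, hf, hg, (by rw [emb_inter_insert hφ hw, emb_card hφ]; decide), (by rw [insert_inter_emb hφ hw, emb_card hφ]; decide), (by rw [emb_inter hφ, emb_empty_iff hφ]; decide)⟩
    have F2 : emb φ {1,3,4} ∉ H := fun hg => hP ⟨insert w (emb φ {0,2}), emb φ {0,1,5}, emb φ {1,3,4}, hf, ht2, hg, (by rw [insert_inter_emb hφ hw, emb_card hφ]; decide), (by rw [emb_inter hφ, emb_card hφ]; decide), (by rw [insert_inter_emb hφ hw, emb_empty_iff hφ]; decide)⟩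
    have F3 : emb φ {1,4,5} ∉ H := fun hg => hP ⟨insert w (emb φ {0,2}), emb φ {1,2,3}, emb φ {1,4,5}, hf, ht3, hg, (by rw [insert_inter_emb hφ hw, emb_card hφ]; decide), (by rw [emb_inter hφ, emb_card hφ]; decide), (by rw [insert_inter_emb hφ hw, emb_empty_iff hφ]; decide)⟩
    have F4 : emb φ {2,3,4} ∉ H := fun hg => hP ⟨emb φ {0,1,5}, insert w (emb φ {0,2}), emb φ {2,3,4}, ht2, hf, hg, (by rw [emb_inter_insert hφ hw, emb_card hφ]; decide), (by rw [insert_inter_emb hφ hw, emb_card hφ]; decide), (by rw [emb_inter hφ, emb_empty_iff hφ]; decide)⟩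
    have F5 : emb φ {3,4,5} ∉ H := fun hg => hP ⟨insert w (emb φ {0,2}), emb φ {0,1,5}, emb φ {3,4,5}, hf, ht2, hg, (by rw [insert_inter_emb hφ hw, emb_card hφ]; decide), (by rw [emb_inter hφ, emb_card hφ]; decide), (by rw [insert_inter_emb hφ hw, emb_empty_iff hφ]; decide)⟩
    have P1 : ¬(emb φ {0,1,3} ∈ H ∧ emb φ {2,4,5} ∈ H) := fun ⟨hg, hh⟩ => hP ⟨emb φ {0,1,3}, insert w (emb φ {0,2}), emb φ {2,4,5}, hg, hf, hh, (by rw [emb_inter_insert hφ hw, emb_card hφ]; decide), (by rw [insert_inter_emb hφ hw, emb_card hφ]; decide), (by rw [emb_inter hφ, emb_empty_iff hφ]; decide)⟩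
    have P2 : ¬(emb φ {0,1,4} ∈ H ∧ emb φ {1,3,5} ∈ H) := fun ⟨hg, hh⟩ => hP ⟨insert w (emb φ {0,2}), emb φ {0,1,4}, emb φ {1,3,5}, hf, hg, hh, (by rw [insert_inter_emb hφ hw, emb_card hφ]; decide), (by rw [emb_inter hφ, emb_card hφ]; decide), (by rw [insert_inter_emb hφ hw, emb_empty_iff hφ]; decide)⟩
    have P3 : ¬(emb φ {0,3,4} ∈ H ∧ emb φ {1,2,5} ∈ H) := fun ⟨hg, hh⟩ => hP ⟨emb φ {0,3,4}, insert w (emb φ {0,2}), emb φ {1,2,5}, hg, hf, hh, (by rw [emb_inter_insert hφ hw, emb_card hφ]; decide), (by rw [insert_inter_emb hφ hw, emb_card hφ]; decide), (by rw [emb_inter hφ, emb_empty_iff hφ]; decide)⟩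
    have P4 : ¬(emb φ {0,3,5} ∈ H ∧ emb φ {1,2,4} ∈ H) := fun ⟨hg, hh⟩ => hP ⟨emb φ {0,3,5}, insert w (emb φ {0,2}), emb φ {1,2,4}, hg, hf, hh, (by rw [emb_inter_insert hφ hw, emb_card hφ]; decide), (by rw [insert_inter_emb hφ hw, emb_card hφ]; decide), (by rw [emb_inter hφ, emb_empty_iff hφ]; decide)⟩
    refine count_blocks _ (![{({0,2,4} : Finset (Fin 6))}, {({0,1,5} : Finset (Fin 6))}, {({1,2,3} : Finset (Fin 6))}, {{0,1,3},{2,4,5}}, {{0,1,4},{1,3,5}}, {{0,3,4},{1,2,5}}, {{0,3,5},{1,2,4}}, {{0,1,2}}, {{0,2,3}}, {{0,2,5}}, {{2,3,5}}]) ?_ ?_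
    · intro s hs
      have h20 : s ∈ Finset.univ.powersetCard 3 := (Finset.mem_filter.1 hs).1
      have hsH : emb φ s ∈ H := (Finset.mem_filter.1 hs).2
      have hn1 : s ≠ {0,4,5} := fun h => F1 (h ▸ hsH)
      have hn2 : s ≠ {1,3,4} := fun h => F2 (h ▸ hsH)
      have hn3 : s ≠ {1,4,5} := fun h => F3 (h ▸ hsH)
      have hn4 : s ≠ {2,3,4} := fun h => F4 (h ▸ hsH)
      have hn5 : s ≠ {3,4,5} := fun h => F5 (h ▸ hsH)
      exact (by decide : ∀ s : Finset (Fin 6), s ∈ Finset.univ.powersetCard 3 → s ≠ {0,4,5} → s ≠ {1,3,4} → s ≠ {1,4,5} → s ≠ {2,3,4} → s ≠ {3,4,5} → ∃ k : Fin 11, s ∈ (![{({0,2,4} : Finset (Fin 6))}, {({0,1,5} : Finset (Fin 6))}, {({1,2,3} : Finset (Fin 6))}, {{0,1,3},{2,4,5}}, {{0,1,4},{1,3,5}}, {{0,3,4},{1,2,5}}, {{0,3,5},{1,2,4}}, {{0,1,2}}, {{0,2,3}}, {{0,2,5}}, {{2,3,5}}] : Fin 11 → Finset (Finset (Fin 6)))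 k) s h20 hn1 hn2 hn3 hn4 hn5
    · intro k
      fin_cases k
      · exact single_bd _ _
      · exact single_bd _ _
      · exact single_bd _ _
      · exact pair_bd (fun ⟨h1, h2⟩ => P1 ⟨(Finset.mem_filter.1 h1).2, (Finset.mem_filter.1 h2).2⟩)
      · exact pair_bd (fun ⟨h1, h2⟩ => P2 ⟨(Finset.mem_filter.1 h1).2, (Finset.mem_filter.1 h2).2⟩)
      · exact pair_bd (fun ⟨h1, h2⟩ => P3 ⟨(Finset.mem_filter.1 h1).2, (Finset.mem_filter.1 h2).2⟩)
      · exact pair_bd (fun ⟨h1, h2⟩ => P4 ⟨(Finset.mem_filter.1 h1).2, (Finset.mem_filter.1 h2).2⟩)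
      · exact single_bd _ _
      · exact single_bd _ _
      · exact single_bd _ _
      · exact single_bd _ _
  · have F1 : emb φ {0,3,4} ∉ H := fun hg => hP ⟨insert w (emb φ {1,2}), emb φ {0,1,5}, emb φ {0,3,4}, hf, ht2, hg, (by rw [insert_inter_emb hφ hw, emb_card hφ]; decide), (by rw [emb_inter hφ, emb_card hφ]; decide), (by rw [insert_inter_emb hφ hw, emb_empty_iff hφ]; decide)⟩
    have F2 : emb φ {0,3,5} ∉ H := fun hg => hP ⟨insert w (emb φ {1,2}), emb φ {0,2,4}, emb φ {0,3,5}, hf, ht1, hg, (by rw [insert_inter_emb hφ hw, emb_card hφ]; decide), (by rw [emb_inter hφ, emb_card hφ]; decide), (by rw [insert_inter_emb hφ hw, emb_empty_iff hφ]; decide)⟩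
    have F3 : emb φ {1,3,5} ∉ H := fun hg => hP ⟨emb φ {0,2,4}, insert w (emb φ {1,2}), emb φ {1,3,5}, ht1, hf, hg, (by rw [emb_inter_insert hφ hw, emb_card hφ]; decide), (by rw [insert_inter_emb hφ hw, emb_card hφ]; decide), (by rw [emb_inter hφ, emb_empty_iff hφ]; decide)⟩
    have F4 : emb φ {2,3,4} ∉ H := fun hg => hP ⟨emb φ {0,1,5}, insert w (emb φ {1,2}), emb φ {2,3,4}, ht2, hf, hg, (by rw [emb_inter_insert hφ hw, emb_card hφ]; decide), (by rw [insert_inter_emb hφ hw, emb_card hφ]; decide), (by rw [emb_inter hφ, emb_empty_iff hφ]; decide)⟩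
    have F5 : emb φ {3,4,5} ∉ H := fun hg => hP ⟨insert w (emb φ {1,2}), emb φ {0,2,4}, emb φ {3,4,5}, hf, ht1, hg, (by rw [insert_inter_emb hφ hw, emb_card hφ]; decide), (by rw [emb_inter hφ, emb_card hφ]; decide), (by rw [insert_inter_emb hφ hw, emb_empty_iff hφ]; decide)⟩
    have P1 : ¬(emb φ {0,1,3} ∈ H ∧ emb φ {0,4,5} ∈ H) := fun ⟨hg, hh⟩ => hP ⟨insert w (emb φ {1,2}), emb φ {0,1,3}, emb φ {0,4,5}, hf, hg, hh, (by rw [insert_inter_emb hφ hw, emb_card hφ]; decide), (by rw [emb_inter hφ, emb_card hφ]; decide), (by rw [insert_inter_emb hφ hw, emb_empty_iff hφ]; decide)⟩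
    have P2 : ¬(emb φ {0,1,4} ∈ H ∧ emb φ {2,3,5} ∈ H) := fun ⟨hg, hh⟩ => hP ⟨emb φ {0,1,4}, insert w (emb φ {1,2}), emb φ {2,3,5}, hg, hf, hh, (by rw [emb_inter_insert hφ hw, emb_card hφ]; decide), (by rw [insert_inter_emb hφ hw, emb_card hφ]; decide), (by rw [emb_inter hφ, emb_empty_iff hφ]; decide)⟩
    have P3 : ¬(emb φ {0,2,3} ∈ H ∧ emb φ {1,4,5} ∈ H) := fun ⟨hg, hh⟩ => hP ⟨emb φ {0,2,3}, insert w (emb φ {1,2}), emb φ {1,4,5}, hg, hf, hh, (by rw [emb_inter_insert hφ hw, emb_card hφ]; decide), (by rw [insert_inter_emb hφ hw, emb_card hφ]; decide), (by rw [emb_inter hφ, emb_empty_iff hφ]; decide)⟩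
    have P4 : ¬(emb φ {0,2,5} ∈ H ∧ emb φ {1,3,4} ∈ H) := fun ⟨hg, hh⟩ => hP ⟨emb φ {0,2,5}, insert w (emb φ {1,2}), emb φ {1,3,4}, hg, hf, hh, (by rw [emb_inter_insert hφ hw, emb_card hφ]; decide), (by rw [insert_inter_emb hφ hw, emb_card hφ]; decide), (by rw [emb_inter hφ, emb_empty_iff hφ]; decide)⟩
    refine count_blocks _ (![{({0,2,4} : Finset (Fin 6))}, {({0,1,5} : Finset (Fin 6))}, {({1,2,3} : Finset (Fin 6))}, {{0,1,3},{0,4,5}}, {{0,1,4},{2,3,5}}, {{0,2,3},{1,4,5}}, {{0,2,5},{1,3,4}}, {{0,1,2}}, {{1,2,4}}, {{1,2,5}}, {{2,4,5}}]) ?_ ?_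
    · intro s hs
      have h20 : s ∈ Finset.univ.powersetCard 3 := (Finset.mem_filter.1 hs).1
      have hsH : emb φ s ∈ H := (Finset.mem_filter.1 hs).2
      have hn1 : s ≠ {0,3,4} := fun h => F1 (h ▸ hsH)
      have hn2 : s ≠ {0,3,5} := fun h => F2 (h ▸ hsH)
      have hn3 : s ≠ {1,3,5} := fun h => F3 (h ▸ hsH)
      have hn4 : s ≠ {2,3,4} := fun h => F4 (h ▸ hsH)
      have hn5 : s ≠ {3,4,5} := fun h => F5 (h ▸ hsH)
      exact (by decide : ∀ s : Finset (Fin 6), s ∈ Finset.univ.powersetCard 3 → s ≠ {0,3,4} → s ≠ {0,3,5} → s ≠ {1,3,5} → s ≠ {2,3,4} → s ≠ {3,4,5} → ∃ k : Fin 11, s ∈ (![{({0,2,4} : Finset (Fin 6))}, {({0,1,5} : Finset (Fin 6))}, {({1,2,3} : Finset (Fin 6))}, {{0,1,3},{0,4,5}}, {{0,1,4},{2,3,5}}, {{0,2,3},{1,4,5}}, {{0,2,5},{1,3,4}}, {{0,1,2}}, {{1,2,4}}, {{1,2,5}}, {{2,4,5}}] : Fin 11 → Finset (Finset (Fin 6)))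 k) s h20 hn1 hn2 hn3 hn4 hn5
    · intro k
      fin_cases k
      · exact single_bd _ _
      · exact single_bd _ _
      · exact single_bd _ _
      · exact pair_bd (fun ⟨h1, h2⟩ => P1 ⟨(Finset.mem_filter.1 h1).2, (Finset.mem_filter.1 h2).2⟩)
      · exact pair_bd (fun ⟨h1, h2⟩ => P2 ⟨(Finset.mem_filter.1 h1).2, (Finset.mem_filter.1 h2).2⟩)
      · exact pair_bd (fun ⟨h1, h2⟩ => P3 ⟨(Finset.mem_filter.1 h1).2, (Finset.mem_filter.1 h2).2⟩)
      · exact pair_bd (fun ⟨h1, h2⟩ => P4 ⟨(Finset.mem_filter.1 h1).2, (Finset.mem_filter.1 h2).2⟩)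
      · exact single_bd _ _
      · exact single_bd _ _
      · exact single_bd _ _
      · exact single_bd _ _
  · have F1 : emb φ {0,4,5} ∉ H := fun hg => hP ⟨emb φ {1,2,3}, insert w (emb φ {0,3}), emb φ {0,4,5}, ht3, hf, hg, (by rw [emb_inter_insert hφ hw, emb_card hφ]; decide), (by rw [insert_inter_emb hφ hw, emb_card hφ]; decide), (by rw [emb_inter hφ, emb_empty_iff hφ]; decide)⟩
    have F2 : emb φ {1,2,4} ∉ H := fun hg => hP ⟨insert w (emb φ {0,3}), emb φ {0,1,5}, emb φ {1,2,4}, hf, ht2, hg, (by rw [insert_inter_emb hφ hw, emb_card hφ]; decide), (by rw [emb_inter hφ, emb_card hφ]; decide), (by rw [insert_inter_emb hφ hw, emb_empty_iff hφ]; decide)⟩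
    have F3 : emb φ {1,2,5} ∉ H := fun hg => hP ⟨insert w (emb φ {0,3}), emb φ {0,2,4}, emb φ {1,2,5}, hf, ht1, hg, (by rw [insert_inter_emb hφ hw, emb_card hφ]; decide), (by rw [emb_inter hφ, emb_card hφ]; decide), (by rw [insert_inter_emb hφ hw, emb_empty_iff hφ]; decide)⟩
    have F4 : emb φ {1,3,5} ∉ H := fun hg => hP ⟨emb φ {0,2,4}, insert w (emb φ {0,3}), emb φ {1,3,5}, ht1, hf, hg, (by rw [emb_inter_insert hφ hw, emb_card hφ]; decide), (by rw [insert_inter_emb hφ hw, emb_card hφ]; decide), (by rw [emb_inter hφ, emb_empty_iff hφ]; decide)⟩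
    have F5 : emb φ {1,4,5} ∉ H := fun hg => hP ⟨insert w (emb φ {0,3}), emb φ {0,2,4}, emb φ {1,4,5}, hf, ht1, hg, (by rw [insert_inter_emb hφ hw, emb_card hφ]; decide), (by rw [emb_inter hφ, emb_card hφ]; decide), (by rw [insert_inter_emb hφ hw, emb_empty_iff hφ]; decide)⟩
    have F6 : emb φ {2,3,4} ∉ H := fun hg => hP ⟨emb φ {0,1,5}, insert w (emb φ {0,3}), emb φ {2,3,4}, ht2, hf, hg, (by rw [emb_inter_insert hφ hw, emb_card hφ]; decide), (by rw [insert_inter_emb hφ hw, emb_card hφ]; decide), (by rw [emb_inter hφ, emb_empty_iff hφ]; decide)⟩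
    have F7 : emb φ {2,4,5} ∉ H := fun hg => hP ⟨insert w (emb φ {0,3}), emb φ {0,1,5}, emb φ {2,4,5}, hf, ht2, hg, (by rw [insert_inter_emb hφ hw, emb_card hφ]; decide), (by rw [emb_inter hφ, emb_card hφ]; decide), (by rw [insert_inter_emb hφ hw, emb_empty_iff hφ]; decide)⟩
    have P1 : ¬(emb φ {0,1,2} ∈ H ∧ emb φ {3,4,5} ∈ H) := fun ⟨hg, hh⟩ => hP ⟨emb φ {0,1,2}, insert w (emb φ {0,3}), emb φ {3,4,5}, hg, hf, hh, (by rw [emb_inter_insert hφ hw, emb_card hφ]; decide), (by rw [insert_inter_emb hφ hw, emb_card hφ]; decide), (by rw [emb_inter hφ, emb_empty_iff hφ]; decide)⟩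
    have P2 : ¬(emb φ {0,1,4} ∈ H ∧ emb φ {2,3,5} ∈ H) := fun ⟨hg, hh⟩ => hP ⟨emb φ {0,1,4}, insert w (emb φ {0,3}), emb φ {2,3,5}, hg, hf, hh, (by rw [emb_inter_insert hφ hw, emb_card hφ]; decide), (by rw [insert_inter_emb hφ hw, emb_card hφ]; decide), (by rw [emb_inter hφ, emb_empty_iff hφ]; decide)⟩
    have P3 : ¬(emb φ {0,2,5} ∈ H ∧ emb φ {1,3,4} ∈ H) := fun ⟨hg, hh⟩ => hP ⟨emb φ {0,2,5}, insert w (emb φ {0,3}), emb φ {1,3,4}, hg, hf, hh, (by rw [emb_inter_insert hφ hw, emb_card hφ]; decide), (by rw [insert_inter_emb hφ hw, emb_card hφ]; decide), (by rw [emb_inter hφ, emb_empty_iff hφ]; decide)⟩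
    refine count_blocks _ (![{({0,2,4} : Finset (Fin 6))}, {({0,1,5} : Finset (Fin 6))}, {({1,2,3} : Finset (Fin 6))}, {{0,1,2},{3,4,5}}, {{0,1,4},{2,3,5}}, {{0,2,5},{1,3,4}}, {{0,1,3}}, {{0,2,3}}, {{0,3,4}}, {{0,3,5}}, ∅]) ?_ ?_
    · intro s hs
      have h20 : s ∈ Finset.univ.powersetCard 3 := (Finset.mem_filter.1 hs).1
      have hsH : emb φ s ∈ H := (Finset.mem_filter.1 hs).2
      have hn1 : s ≠ {0,4,5} := fun h => F1 (h ▸ hsH)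
      have hn2 : s ≠ {1,2,4} := fun h => F2 (h ▸ hsH)
      have hn3 : s ≠ {1,2,5} := fun h => F3 (h ▸ hsH)
      have hn4 : s ≠ {1,3,5} := fun h => F4 (h ▸ hsH)
      have hn5 : s ≠ {1,4,5} := fun h => F5 (h ▸ hsH)
      have hn6 : s ≠ {2,3,4} := fun h => F6 (h ▸ hsH)
      have hn7 : s ≠ {2,4,5} := fun h => F7 (h ▸ hsH)
      exact (by decide : ∀ s : Finset (Fin 6), s ∈ Finset.univ.powersetCard 3 → s ≠ {0,4,5} → s ≠ {1,2,4} → s ≠ {1,2,5} → s ≠ {1,3,5} → s ≠ {1,4,5} → s ≠ {2,3,4} → s ≠ {2,4,5} → ∃ k : Fin 11, s ∈ (![{({0,2,4} : Finset (Fin 6))}, {({0,1,5} : Finset (Fin 6))}, {({1,2,3} : Finset (Fin 6))}, {{0,1,2},{3,4,5}}, {{0,1,4},{2,3,5}}, {{0,2,5},{1,3,4}}, {{0,1,3}}, {{0,2,3}}, {{0,3,4}}, {{0,3,5}}, ∅] : Fin 11 → Finset (Finset (Fin 6))) k) s h20 hn1 hn2 hn3 hn4 hn5 hn6 hn7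
    · intro k
      fin_cases k
      · exact single_bd _ _
      · exact single_bd _ _
      · exact single_bd _ _
      · exact pair_bd (fun ⟨h1, h2⟩ => P1 ⟨(Finset.mem_filter.1 h1).2, (Finset.mem_filter.1 h2).2⟩)
      · exact pair_bd (fun ⟨h1, h2⟩ => P2 ⟨(Finset.mem_filter.1 h1).2, (Finset.mem_filter.1 h2).2⟩)
      · exact pair_bd (fun ⟨h1, h2⟩ => P3 ⟨(Finset.mem_filter.1 h1).2, (Finset.mem_filter.1 h2).2⟩)
      · exact single_bd _ _
      · exact single_bd _ _
      · exact single_bd _ _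
      · exact single_bd _ _
      · exact le_trans (Finset.card_le_card Finset.inter_subset_right) (by decide)
  · have F1 : emb φ {0,2,3} ∉ H := fun hg => hP ⟨insert w (emb φ {1,4}), emb φ {0,1,5}, emb φ {0,2,3}, hf, ht2, hg, (by rw [insert_inter_emb hφ hw, emb_card hφ]; decide), (by rw [emb_inter hφ, emb_card hφ]; decide), (by rw [insert_inter_emb hφ hw, emb_empty_iff hφ]; decide)⟩
    have F2 : emb φ {0,2,5} ∉ H := fun hg => hP ⟨insert w (emb φ {1,4}), emb φ {1,2,3}, emb φ {0,2,5}, hf, ht3, hg, (by rw [insert_inter_emb hφ hw, emb_card hφ]; decide), (by rw [emb_inter hφ, emb_card hφ]; decide), (by rw [insert_inter_emb hφ hw, emb_empty_iff hφ]; decide)⟩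
    have F3 : emb φ {0,3,5} ∉ H := fun hg => hP ⟨insert w (emb φ {1,4}), emb φ {0,2,4}, emb φ {0,3,5}, hf, ht1, hg, (by rw [insert_inter_emb hφ hw, emb_card hφ]; decide), (by rw [emb_inter hφ, emb_card hφ]; decide), (by rw [insert_inter_emb hφ hw, emb_empty_iff hφ]; decide)⟩
    have F4 : emb φ {0,4,5} ∉ H := fun hg => hP ⟨emb φ {1,2,3}, insert w (emb φ {1,4}), emb φ {0,4,5}, ht3, hf, hg, (by rw [emb_inter_insert hφ hw, emb_card hφ]; decide), (by rw [insert_inter_emb hφ hw, emb_card hφ]; decide), (by rw [emb_inter hφ, emb_empty_iff hφ]; decide)⟩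
    have F5 : emb φ {1,3,5} ∉ H := fun hg => hP ⟨emb φ {0,2,4}, insert w (emb φ {1,4}), emb φ {1,3,5}, ht1, hf, hg, (by rw [emb_inter_insert hφ hw, emb_card hφ]; decide), (by rw [insert_inter_emb hφ hw, emb_card hφ]; decide), (by rw [emb_inter hφ, emb_empty_iff hφ]; decide)⟩
    have F6 : emb φ {2,3,4} ∉ H := fun hg => hP ⟨emb φ {0,1,5}, insert w (emb φ {1,4}), emb φ {2,3,4}, ht2, hf, hg, (by rw [emb_inter_insert hφ hw, emb_card hφ]; decide), (by rw [insert_inter_emb hφ hw, emb_card hφ]; decide), (by rw [emb_inter hφ, emb_empty_iff hφ]; decide)⟩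
    have F7 : emb φ {2,3,5} ∉ H := fun hg => hP ⟨insert w (emb φ {1,4}), emb φ {0,2,4}, emb φ {2,3,5}, hf, ht1, hg, (by rw [insert_inter_emb hφ hw, emb_card hφ]; decide), (by rw [emb_inter hφ, emb_card hφ]; decide), (by rw [insert_inter_emb hφ hw, emb_empty_iff hφ]; decide)⟩
    have P1 : ¬(emb φ {0,1,2} ∈ H ∧ emb φ {3,4,5} ∈ H) := fun ⟨hg, hh⟩ => hP ⟨emb φ {0,1,2}, insert w (emb φ {1,4}), emb φ {3,4,5}, hg, hf, hh, (by rw [emb_inter_insert hφ hw, emb_card hφ]; decide), (by rw [insert_inter_emb hφ hw, emb_card hφ]; decide), (by rw [emb_inter hφ, emb_empty_iff hφ]; decide)⟩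
    have P2 : ¬(emb φ {0,1,3} ∈ H ∧ emb φ {2,4,5} ∈ H) := fun ⟨hg, hh⟩ => hP ⟨emb φ {0,1,3}, insert w (emb φ {1,4}), emb φ {2,4,5}, hg, hf, hh, (by rw [emb_inter_insert hφ hw, emb_card hφ]; decide), (by rw [insert_inter_emb hφ hw, emb_card hφ]; decide), (by rw [emb_inter hφ, emb_empty_iff hφ]; decide)⟩
    have P3 : ¬(emb φ {0,3,4} ∈ H ∧ emb φ {1,2,5} ∈ H) := fun ⟨hg, hh⟩ => hP ⟨emb φ {0,3,4}, insert w (emb φ {1,4}), emb φ {1,2,5}, hg, hf, hh, (by rw [emb_inter_insert hφ hw, emb_card hφ]; decide), (by rw [insert_inter_emb hφ hw, emb_card hφ]; decide), (by rw [emb_inter hφ, emb_empty_iff hφ]; decide)⟩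
    refine count_blocks _ (![{({0,2,4} : Finset (Fin 6))}, {({0,1,5} : Finset (Fin 6))}, {({1,2,3} : Finset (Fin 6))}, {{0,1,2},{3,4,5}}, {{0,1,3},{2,4,5}}, {{0,3,4},{1,2,5}}, {{0,1,4}}, {{1,2,4}}, {{1,3,4}}, {{1,4,5}}, ∅]) ?_ ?_
    · intro s hs
      have h20 : s ∈ Finset.univ.powersetCard 3 := (Finset.mem_filter.1 hs).1
      have hsH : emb φ s ∈ H := (Finset.mem_filter.1 hs).2
      have hn1 : s ≠ {0,2,3} := fun h => F1 (h ▸ hsH)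
      have hn2 : s ≠ {0,2,5} := fun h => F2 (h ▸ hsH)
      have hn3 : s ≠ {0,3,5} := fun h => F3 (h ▸ hsH)
      have hn4 : s ≠ {0,4,5} := fun h => F4 (h ▸ hsH)
      have hn5 : s ≠ {1,3,5} := fun h => F5 (h ▸ hsH)
      have hn6 : s ≠ {2,3,4} := fun h => F6 (h ▸ hsH)
      have hn7 : s ≠ {2,3,5} := fun h => F7 (h ▸ hsH)
      exact (by decide : ∀ s : Finset (Fin 6), s ∈ Finset.univ.powersetCard 3 → s ≠ {0,2,3} → s ≠ {0,2,5} → s ≠ {0,3,5} → s ≠ {0,4,5} → s ≠ {1,3,5} → s ≠ {2,3,4} → s ≠ {2,3,5} → ∃ k : Fin 11, s ∈ (![{({0,2,4} : Finset (Fin 6))}, {({0,1,5} : Finset (Fin 6))}, {({1,2,3} : Finset (Fin 6))}, {{0,1,2},{3,4,5}}, {{0,1,3},{2,4,5}}, {{0,3,4},{1,2,5}}, {{0,1,4}}, {{1,2,4}}, {{1,3,4}}, {{1,4,5}}, ∅] : Fin 11 → Finset (Finset (Fin 6))) k) s h20 hn1 hn2 hn3 hn4 hn5 hn6 hn7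
    · intro k
      fin_cases k
      · exact single_bd _ _
      · exact single_bd _ _
      · exact single_bd _ _
      · exact pair_bd (fun ⟨h1, h2⟩ => P1 ⟨(Finset.mem_filter.1 h1).2, (Finset.mem_filter.1 h2).2⟩)
      · exact pair_bd (fun ⟨h1, h2⟩ => P2 ⟨(Finset.mem_filter.1 h1).2, (Finset.mem_filter.1 h2).2⟩)
      · exact pair_bd (fun ⟨h1, h2⟩ => P3 ⟨(Finset.mem_filter.1 h1).2, (Finset.mem_filter.1 h2).2⟩)
      · exact single_bd _ _
      · exact single_bd _ _
      · exact single_bd _ _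
      · exact single_bd _ _
      · exact le_trans (Finset.card_le_card Finset.inter_subset_right) (by decide)
  · have F1 : emb φ {0,1,3} ∉ H := fun hg => hP ⟨insert w (emb φ {2,5}), emb φ {0,2,4}, emb φ {0,1,3}, hf, ht1, hg, (by rw [insert_inter_emb hφ hw, emb_card hφ]; decide), (by rw [emb_inter hφ, emb_card hφ]; decide), (by rw [insert_inter_emb hφ hw, emb_empty_iff hφ]; decide)⟩
    have F2 : emb φ {0,1,4} ∉ H := fun hg => hP ⟨insert w (emb φ {2,5}), emb φ {1,2,3}, emb φ {0,1,4}, hf, ht3, hg, (by rw [insert_inter_emb hφ hw, emb_card hφ]; decide), (by rw [emb_inter hφ, emb_card hφ]; decide), (by rw [insert_inter_emb hφ hw, emb_empty_iff hφ]; decide)⟩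
    have F3 : emb φ {0,3,4} ∉ H := fun hg => hP ⟨insert w (emb φ {2,5}), emb φ {0,1,5}, emb φ {0,3,4}, hf, ht2, hg, (by rw [insert_inter_emb hφ hw, emb_card hφ]; decide), (by rw [emb_inter hφ, emb_card hφ]; decide), (by rw [insert_inter_emb hφ hw, emb_empty_iff hφ]; decide)⟩
    have F4 : emb φ {0,4,5} ∉ H := fun hg => hP ⟨emb φ {1,2,3}, insert w (emb φ {2,5}), emb φ {0,4,5}, ht3, hf, hg, (by rw [emb_inter_insert hφ hw, emb_card hφ]; decide), (by rw [insert_inter_emb hφ hw, emb_card hφ]; decide), (by rw [emb_inter hφ, emb_empty_iff hφ]; decide)⟩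
    have F5 : emb φ {1,3,4} ∉ H := fun hg => hP ⟨insert w (emb φ {2,5}), emb φ {0,2,4}, emb φ {1,3,4}, hf, ht1, hg, (by rw [insert_inter_emb hφ hw, emb_card hφ]; decide), (by rw [emb_inter hφ, emb_card hφ]; decide), (by rw [insert_inter_emb hφ hw, emb_empty_iff hφ]; decide)⟩
    have F6 : emb φ {1,3,5} ∉ H := fun hg => hP ⟨emb φ {0,2,4}, insert w (emb φ {2,5}), emb φ {1,3,5}, ht1, hf, hg, (by rw [emb_inter_insert hφ hw, emb_card hφ]; decide), (by rw [insert_inter_emb hφ hw, emb_card hφ]; decide), (by rw [emb_inter hφ, emb_empty_iff hφ]; decide)⟩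
    have F7 : emb φ {2,3,4} ∉ H := fun hg => hP ⟨emb φ {0,1,5}, insert w (emb φ {2,5}), emb φ {2,3,4}, ht2, hf, hg, (by rw [emb_inter_insert hφ hw, emb_card hφ]; decide), (by rw [insert_inter_emb hφ hw, emb_card hφ]; decide), (by rw [emb_inter hφ, emb_empty_iff hφ]; decide)⟩
    have P1 : ¬(emb φ {0,1,2} ∈ H ∧ emb φ {3,4,5} ∈ H) := fun ⟨hg, hh⟩ => hP ⟨emb φ {0,1,2}, insert w (emb φ {2,5}), emb φ {3,4,5}, hg, hf, hh, (by rw [emb_inter_insert hφ hw, emb_card hφ]; decide), (by rw [insert_inter_emb hφ hw, emb_card hφ]; decide), (by rw [emb_inter hφ, emb_empty_iff hφ]; decide)⟩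
    have P2 : ¬(emb φ {0,2,3} ∈ H ∧ emb φ {1,4,5} ∈ H) := fun ⟨hg, hh⟩ => hP ⟨emb φ {0,2,3}, insert w (emb φ {2,5}), emb φ {1,4,5}, hg, hf, hh, (by rw [emb_inter_insert hφ hw, emb_card hφ]; decide), (by rw [insert_inter_emb hφ hw, emb_card hφ]; decide), (by rw [emb_inter hφ, emb_empty_iff hφ]; decide)⟩
    have P3 : ¬(emb φ {0,3,5} ∈ H ∧ emb φ {1,2,4} ∈ H) := fun ⟨hg, hh⟩ => hP ⟨emb φ {0,3,5}, insert w (emb φ {2,5}), emb φ {1,2,4}, hg, hf, hh, (by rw [emb_inter_insert hφ hw, emb_card hφ]; decide), (by rw [insert_inter_emb hφ hw, emb_card hφ]; decide), (by rw [emb_inter hφ, emb_empty_iff hφ]; decide)⟩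
    refine count_blocks _ (![{({0,2,4} : Finset (Fin 6))}, {({0,1,5} : Finset (Fin 6))}, {({1,2,3} : Finset (Fin 6))}, {{0,1,2},{3,4,5}}, {{0,2,3},{1,4,5}}, {{0,3,5},{1,2,4}}, {{0,2,5}}, {{1,2,5}}, {{2,3,5}}, {{2,4,5}}, ∅]) ?_ ?_
    · intro s hs
      have h20 : s ∈ Finset.univ.powersetCard 3 := (Finset.mem_filter.1 hs).1
      have hsH : emb φ s ∈ H := (Finset.mem_filter.1 hs).2
      have hn1 : s ≠ {0,1,3} := fun h => F1 (h ▸ hsH)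
      have hn2 : s ≠ {0,1,4} := fun h => F2 (h ▸ hsH)
      have hn3 : s ≠ {0,3,4} := fun h => F3 (h ▸ hsH)
      have hn4 : s ≠ {0,4,5} := fun h => F4 (h ▸ hsH)
      have hn5 : s ≠ {1,3,4} := fun h => F5 (h ▸ hsH)
      have hn6 : s ≠ {1,3,5} := fun h => F6 (h ▸ hsH)
      have hn7 : s ≠ {2,3,4} := fun h => F7 (h ▸ hsH)
      exact (by decide : ∀ s : Finset (Fin 6), s ∈ Finset.univ.powersetCard 3 → s ≠ {0,1,3} → s ≠ {0,1,4} → s ≠ {0,3,4} → s ≠ {0,4,5} → s ≠ {1,3,4} → s ≠ {1,3,5} → s ≠ {2,3,4} → ∃ k : Fin 11, s ∈ (![{({0,2,4} : Finset (Fin 6))}, {({0,1,5} : Finset (Fin 6))}, {({1,2,3} : Finset (Fin 6))}, {{0,1,2},{3,4,5}}, {{0,2,3},{1,4,5}}, {{0,3,5},{1,2,4}}, {{0,2,5}}, {{1,2,5}}, {{2,3,5}}, {{2,4,5}}, ∅] : Fin 11 → Finset (Finset (Fin 6))) k) s h20 hn1 hn2 hn3 hn4 hn5 hn6 hn7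
    · intro k
      fin_cases k
      · exact single_bd _ _
      · exact single_bd _ _
      · exact single_bd _ _
      · exact pair_bd (fun ⟨h1, h2⟩ => P1 ⟨(Finset.mem_filter.1 h1).2, (Finset.mem_filter.1 h2).2⟩)
      · exact pair_bd (fun ⟨h1, h2⟩ => P2 ⟨(Finset.mem_filter.1 h1).2, (Finset.mem_filter.1 h2).2⟩)
      · exact pair_bd (fun ⟨h1, h2⟩ => P3 ⟨(Finset.mem_filter.1 h1).2, (Finset.mem_filter.1 h2).2⟩)
      · exact single_bd _ _
      · exact single_bd _ _
      · exact single_bd _ _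
      · exact single_bd _ _
      · exact le_trans (Finset.card_le_card Finset.inter_subset_right) (by decide)

lemma tri_mem (ht1 : emb φ {0,2,4} ∈ H) (ht2 : emb φ {0,1,5} ∈ H)
    (ht3 : emb φ {1,2,3} ∈ H) : ∀ j : Fin 3, emb φ (T3 j) ∈ H := fun j =>
  match j with
  | 0 => ht1
  | 1 => ht2
  | 2 => ht3

lemma cross_shape (hφ : Function.Injective φ) (hP : ¬ HasP33 H)
    (ht1 : emb φ {0,2,4} ∈ H) (ht2 : emb φ {0,1,5} ∈ H) (ht3 : emb φ {1,2,3} ∈ H)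
    {e : Finset V} (heH : e ∈ H) (h3 : e.card = 3)
    (h1 : (e ∩ emb φ Finset.univ).Nonempty) (h2 : (e \ emb φ Finset.univ).Nonempty) :
    ∃ w, w ∉ emb φ Finset.univ ∧ ∃ q ∈ AP, e = insert w (emb φ q) := by
  have htri := tri_mem ht1 ht2 ht3
  obtain ⟨s, _, hse⟩ := Finset.subset_image_iff.1
    (show e ∩ Finset.image φ Finset.univ ⊆ Finset.image φ Finset.univ from
      Finset.inter_subset_right)
  have hse' : e ∩ emb φ Finset.univ = emb φ s := hse.symm
  have inter_t : ∀ t : Finset (Fin 6), e ∩ emb φ t = emb φ (s ∩ t) := by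
    intro t
    calc e ∩ emb φ t = e ∩ (emb φ Finset.univ ∩ emb φ t) := by
          rw [Finset.inter_eq_right.mpr (emb_subset t)]
      _ = (e ∩ emb φ Finset.univ) ∩ emb φ t := by rw [Finset.inter_assoc]
      _ = emb φ s ∩ emb φ t := by rw [hse']
      _ = emb φ (s ∩ t) := emb_inter hφ s t
  have hcards : s.card + (e \ emb φ Finset.univ).card = 3 := by
    rw [← emb_card hφ (s := s), ← hse', Finset.card_inter_add_card_sdiff, h3]
  have hs1 : 1 ≤ s.card := by
    have := Finset.card_pos.mpr h1
    rw [hse', emb_card hφ] at this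
    omega
  have hs2 : 1 ≤ (e \ emb φ Finset.univ).card := Finset.card_pos.mpr h2
  by_cases hA : s.card = 2 ∧ s ∈ AP
  · obtain ⟨w, hw⟩ := Finset.card_eq_one.1 (by omega : (e \ emb φ Finset.univ).card = 1)
    have hwmem : w ∈ e \ emb φ Finset.univ := hw ▸ Finset.mem_singleton_self w
    refine ⟨w, (Finset.mem_sdiff.1 hwmem).2, s, hA.2, ?_⟩
    have hsplit : e ∩ emb φ Finset.univ ∪ e \ emb φ Finset.univ = e := by
      ext a
      simp only [Finset.mem_union, Finset.mem_inter, Finset.mem_sdiff]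
      tauto
    rw [← hsplit, hse', hw, Finset.union_comm, ← Finset.insert_eq]
  · have hcase : s.card = 1 ∨ (s.card = 2 ∧ s ∉ AP) := by
      have h12 : s.card = 1 ∨ s.card = 2 := by omega
      tauto
    obtain ⟨j, k, hjk1, hjk2, hjk3⟩ := shape_fact s hcase
    exact absurd (⟨e, emb φ (T3 j), emb φ (T3 k), heH, htri j, htri k,
      by rw [inter_t, emb_card hφ]; exact hjk1,
      by rw [emb_inter hφ, emb_card hφ]; exact hjk3,
      by rw [inter_t, emb_empty_iff hφ]; exact hjk2⟩ : HasP33 H) hP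

lemma cross_cross (hφ : Function.Injective φ) (hP : ¬ HasP33 H)
    (ht1 : emb φ {0,2,4} ∈ H) (ht2 : emb φ {0,1,5} ∈ H) (ht3 : emb φ {1,2,3} ∈ H)
    {w w' : V} (hw : w ∉ emb φ Finset.univ) (hw' : w' ∉ emb φ Finset.univ) (hne : w ≠ w')
    {q q' : Finset (Fin 6)} (hq : q ∈ AP) (hq' : q' ∈ AP)
    (hf : insert w (emb φ q) ∈ H) (hf' : insert w' (emb φ q') ∈ H) :
    (q ∩ q').Nonempty := by
  have htri := tri_mem ht1 ht2 ht3
  rw [Finset.nonempty_iff_ne_empty]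
  intro hqq
  obtain ⟨j, hj1, hj2⟩ := disj_fact q hq q' hq' hqq
  exact hP ⟨insert w (emb φ q), emb φ (T3 j), insert w' (emb φ q'), hf, htri j, hf',
    by rw [insert_inter_emb hφ hw, emb_card hφ]; exact hj1,
    by rw [emb_inter_insert hφ hw', emb_card hφ]; exact hj2,
    by rw [insert_inter_insert hφ hw hw' hne, emb_empty_iff hφ]; exact hqq⟩

lemma fiber_card_le (hφ : Function.Injective φ) {w : V} (hw : w ∉ emb φ Finset.univ)
    (Q : Finset (Finset (Fin 6))) (C : Finset (Finset V))
    (hsh : ∀ e ∈ C, ∃ q ∈ Q, e = insert w (emb φ q)) : C.card ≤ Q.card := by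
  have key : ∀ e ∈ C, e ∩ emb φ Finset.univ ∈ Q.image (emb φ) := by
    intro e he
    obtain ⟨q, hqQ, rfl⟩ := hsh e he
    refine Finset.mem_image.2 ⟨q, hqQ, ?_⟩
    rw [insert_inter_emb hφ hw, Finset.inter_univ]
  have hinj : Set.InjOn (fun e => e ∩ emb φ Finset.univ) (C : Set (Finset V)) := by
    intro e₁ h₁ e₂ h₂ hee
    obtain ⟨q₁, _, rfl⟩ := hsh e₁ (Finset.mem_coe.1 h₁)
    obtain ⟨q₂, _, rfl⟩ := hsh e₂ (Finset.mem_coe.1 h₂)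
    simp only [insert_inter_emb hφ hw, Finset.inter_univ] at hee
    rw [hee]
  exact le_trans (Finset.card_le_card_of_injOn _ key hinj) Finset.card_image_le

lemma inside_le_J (hφ : Function.Injective φ) (h3 : ∀ e ∈ H, e.card = 3) :
    (H.filter (fun e => e ⊆ emb φ Finset.univ)).card ≤
      ((Finset.univ.powersetCard 3).filter (fun s => emb φ s ∈ H)).card := by
  refine le_trans (Finset.card_le_card ?_) (Finset.card_image_le
    (f := emb φ) (s := (Finset.univ.powersetCard 3).filter (fun s => emb φ s ∈ H)))
  intro e he
  have heH := (Finset.mem_filter.1 he).1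
  have hesub := (Finset.mem_filter.1 he).2
  obtain ⟨s, _, hse⟩ := Finset.subset_image_iff.1
    (show e ⊆ Finset.image φ Finset.univ from hesub)
  have hse' : emb φ s = e := hse
  refine Finset.mem_image.2 ⟨s, Finset.mem_filter.2 ⟨Finset.mem_powersetCard.2
    ⟨Finset.subset_univ s, ?_⟩, by rw [hse']; exact heH⟩, hse'⟩
  rw [← emb_card hφ (s := s), hse', h3 e heH]

end CorAux

open CorAux in
theorem cor_eueuw (V : Type*) [Fintype V] [DecidableEq V]
    (H : Finset (Finset V)) (h3 : ∀ e ∈ H, e.card = 3) (hP : ¬ HasP33 H)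
    (x₁ x₂ x₃ y₁ y₂ y₃ : V)
    (hdist : ({x₁, x₂, x₃, y₁, y₂, y₃} : Finset V).card = 6)
    (hc1 : ({x₁, y₂, x₃} : Finset V) ∈ H) (hc2 : ({x₂, y₃, x₁} : Finset V) ∈ H)
    (hc3 : ({x₃, y₁, x₂} : Finset V) ∈ H)
    (hs : 2 ≤ (Finset.univ \ ({x₁, x₂, x₃, y₁, y₂, y₃} : Finset V)).card) :
    (H.filter fun e => e ⊆ ({x₁, x₂, x₃, y₁, y₂, y₃} : Finset V)).card +
      (H.filter fun e => (e ∩ ({x₁, x₂, x₃, y₁, y₂, y₃} : Finset V)).Nonempty ∧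
        (e \ ({x₁, x₂, x₃, y₁, y₂, y₃} : Finset V)).Nonempty).card ≤
      14 + 3 * (Finset.univ \ ({x₁, x₂, x₃, y₁, y₂, y₃} : Finset V)).card := by
  classical
  have himg : emb (CorAux.phi x₁ x₂ x₃ y₁ y₂ y₃) Finset.univ = ({x₁, x₂, x₃, y₁, y₂, y₃} : Finset V) := by
    show Finset.image (CorAux.phi x₁ x₂ x₃ y₁ y₂ y₃) Finset.univ = _
    rw [show (Finset.univ : Finset (Fin 6)) = {0,1,2,3,4,5} from by decide]
    simp only [Finset.image_insert, Finset.image_singleton]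
    rfl
  have hφ : Function.Injective (CorAux.phi x₁ x₂ x₃ y₁ y₂ y₃) := by
    have h1 : (Finset.univ.image (CorAux.phi x₁ x₂ x₃ y₁ y₂ y₃)).card = (Finset.univ : Finset (Fin 6)).card := by
      have h6 : (Finset.univ.image (CorAux.phi x₁ x₂ x₃ y₁ y₂ y₃)).card = 6 := by
        show (emb (CorAux.phi x₁ x₂ x₃ y₁ y₂ y₃) Finset.univ).card = 6
        rw [himg]; exact hdist
      rw [h6]; decide
    have h2 := Finset.card_image_iff.1 h1
    rw [Finset.coe_univ] at h2
    exact Set.injOn_univ.1 h2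
  have ht1 : emb (CorAux.phi x₁ x₂ x₃ y₁ y₂ y₃) {0,2,4} ∈ H := by
    have he : emb (CorAux.phi x₁ x₂ x₃ y₁ y₂ y₃) ({0,2,4} : Finset (Fin 6)) = ({x₁, y₂, x₃} : Finset V) := by
      show Finset.image (CorAux.phi x₁ x₂ x₃ y₁ y₂ y₃) {0,2,4} = _
      simp only [Finset.image_insert, Finset.image_singleton]
      show ({x₁, x₃, y₂} : Finset V) = _
      ext a
      simp only [Finset.mem_insert, Finset.mem_singleton]
      tauto
    rw [he]; exact hc1
  have ht2 : emb (CorAux.phi x₁ x₂ x₃ y₁ y₂ y₃) {0,1,5} ∈ H := by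
    have he : emb (CorAux.phi x₁ x₂ x₃ y₁ y₂ y₃) ({0,1,5} : Finset (Fin 6)) = ({x₂, y₃, x₁} : Finset V) := by
      show Finset.image (CorAux.phi x₁ x₂ x₃ y₁ y₂ y₃) {0,1,5} = _
      simp only [Finset.image_insert, Finset.image_singleton]
      show ({x₁, x₂, y₃} : Finset V) = _
      ext a
      simp only [Finset.mem_insert, Finset.mem_singleton]
      tauto
    rw [he]; exact hc2
  have ht3 : emb (CorAux.phi x₁ x₂ x₃ y₁ y₂ y₃) {1,2,3} ∈ H := by
    have he : emb (CorAux.phi x₁ x₂ x₃ y₁ y₂ y₃) ({1,2,3} : Finset (Fin 6)) = ({x₃, y₁, x₂} : Finset V) := by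
      show Finset.image (CorAux.phi x₁ x₂ x₃ y₁ y₂ y₃) {1,2,3} = _
      simp only [Finset.image_insert, Finset.image_singleton]
      show ({x₂, x₃, y₁} : Finset V) = _
      ext a
      simp only [Finset.mem_insert, Finset.mem_singleton]
      tauto
    rw [he]; exact hc3
  simp only [← himg] at hs ⊢
  set Cr := H.filter (fun e => (e ∩ emb (CorAux.phi x₁ x₂ x₃ y₁ y₂ y₃) Finset.univ).Nonempty ∧
      (e \ emb (CorAux.phi x₁ x₂ x₃ y₁ y₂ y₃) Finset.univ).Nonempty) with hCrdef
  set W := Finset.univ \ emb (CorAux.phi x₁ x₂ x₃ y₁ y₂ y₃) Finset.univ with hWdef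
  have hJle := inside_le_J (H := H) hφ h3
  by_cases hCrE : Cr = ∅
  · have hJ20 : ((Finset.univ.powersetCard 3).filter (fun s => emb (CorAux.phi x₁ x₂ x₃ y₁ y₂ y₃) s ∈ H)).card ≤ 20 := by
      refine le_trans (Finset.card_le_card (Finset.filter_subset _ _)) ?_
      rw [Finset.card_powersetCard]
      decide
    rw [hCrE]
    have h20 := le_trans hJle hJ20
    simp only [Finset.card_empty, add_zero]
    omega
  · have hshape : ∀ e ∈ Cr, ∃ w, w ∉ emb (CorAux.phi x₁ x₂ x₃ y₁ y₂ y₃) Finset.univ ∧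
        ∃ q ∈ AP, e = insert w (emb (CorAux.phi x₁ x₂ x₃ y₁ y₂ y₃) q) := by
      intro e he
      have heH := (Finset.mem_filter.1 he).1
      exact cross_shape hφ hP ht1 ht2 ht3 heH (h3 e heH)
        (Finset.mem_filter.1 he).2.1 (Finset.mem_filter.1 he).2.2
    obtain ⟨e₀, he₀⟩ := Finset.nonempty_iff_ne_empty.2 hCrE
    obtain ⟨w₀, hw₀U, q₀, hq₀A, he₀eq⟩ := hshape e₀ he₀
    have he₀H : insert w₀ (emb (CorAux.phi x₁ x₂ x₃ y₁ y₂ y₃) q₀) ∈ H := he₀eq ▸ (Finset.mem_filter.1 he₀).1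
    have hI11 : (H.filter (fun e => e ⊆ emb (CorAux.phi x₁ x₂ x₃ y₁ y₂ y₃) Finset.univ)).card ≤ 11 :=
      le_trans hJle (inside_bound hφ hP ht1 ht2 ht3 hw₀U hq₀A he₀H)
    have hfib : Cr ⊆ W.biUnion (fun w => Cr.filter (fun e => w ∈ e)) := by
      intro e he
      obtain ⟨w, hwU, q, hqA, rfl⟩ := hshape e he
      exact Finset.mem_biUnion.2 ⟨w, Finset.mem_sdiff.2 ⟨Finset.mem_univ w, hwU⟩,
        Finset.mem_filter.2 ⟨he, Finset.mem_insert_self w _⟩⟩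
    have hcr1 : Cr.card ≤ ∑ w ∈ W, (Cr.filter (fun e => w ∈ e)).card :=
      le_trans (Finset.card_le_card hfib) Finset.card_biUnion_le
    have hfibshape : ∀ w ∈ W, ∀ e ∈ Cr.filter (fun e => w ∈ e),
        ∃ q ∈ AP, e = insert w (emb (CorAux.phi x₁ x₂ x₃ y₁ y₂ y₃) q) := by
      intro w hwW e he
      have hwe := (Finset.mem_filter.1 he).2
      obtain ⟨w', hw'U, q, hqA, rfl⟩ := hshape e (Finset.mem_filter.1 he).1
      have hwU : w ∉ emb (CorAux.phi x₁ x₂ x₃ y₁ y₂ y₃) Finset.univ := (Finset.mem_sdiff.1 hwW).2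
      have hww' : w = w' := by
        rcases Finset.mem_insert.1 hwe with h | h
        · exact h
        · exact absurd h (not_mem_emb hwU q)
      exact ⟨q, hqA, by rw [hww']⟩
    by_cases hM : ∃ e ∈ Cr, ∃ q ∈ MP, e ∩ emb (CorAux.phi x₁ x₂ x₃ y₁ y₂ y₃) Finset.univ = emb (CorAux.phi x₁ x₂ x₃ y₁ y₂ y₃) q
    · obtain ⟨e₁, he₁, qm, hqmM, he₁U⟩ := hM
      obtain ⟨w₁, hw₁U, q₁, hq₁A, rfl⟩ := hshape e₁ he₁
      have he₁H : insert w₁ (emb (CorAux.phi x₁ x₂ x₃ y₁ y₂ y₃) q₁) ∈ H := (Finset.mem_filter.1 he₁).1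
      have hq1m : q₁ = qm := by
        apply Finset.image_injective hφ
        show Finset.image (CorAux.phi x₁ x₂ x₃ y₁ y₂ y₃) q₁ = Finset.image (CorAux.phi x₁ x₂ x₃ y₁ y₂ y₃) qm
        have h1 : emb (CorAux.phi x₁ x₂ x₃ y₁ y₂ y₃) q₁ = emb (CorAux.phi x₁ x₂ x₃ y₁ y₂ y₃) qm := by
          rw [← he₁U, insert_inter_emb hφ hw₁U, Finset.inter_univ]
        exact h1
      have hq₁M : q₁ ∈ MP := hq1m ▸ hqmM
      have hw₁W : w₁ ∈ W := Finset.mem_sdiff.2 ⟨Finset.mem_univ _, hw₁U⟩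
      have hbig : (Cr.filter (fun e => w₁ ∈ e)).card ≤ 6 :=
        le_trans (fiber_card_le hφ hw₁U AP _ (hfibshape w₁ hw₁W))
          (by decide : AP.card ≤ 6)
      have hsmall : ∀ w ∈ W.erase w₁, (Cr.filter (fun e => w ∈ e)).card ≤ 3 := by
        intro w hw
        have hwW := Finset.mem_of_mem_erase hw
        have hwne : w ≠ w₁ := Finset.ne_of_mem_erase hw
        have hwU : w ∉ emb (CorAux.phi x₁ x₂ x₃ y₁ y₂ y₃) Finset.univ := (Finset.mem_sdiff.1 hwW).2
        have hsh : ∀ e ∈ Cr.filter (fun e => w ∈ e),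
            ∃ q ∈ AP.filter (fun q => (q ∩ q₁).Nonempty), e = insert w (emb (CorAux.phi x₁ x₂ x₃ y₁ y₂ y₃) q) := by
          intro e he
          obtain ⟨q, hqA, rfl⟩ := hfibshape w hwW e he
          have heH : insert w (emb (CorAux.phi x₁ x₂ x₃ y₁ y₂ y₃) q) ∈ H :=
            (Finset.mem_filter.1 (Finset.mem_filter.1 he).1).1
          refine ⟨q, Finset.mem_filter.2 ⟨hqA, ?_⟩, rfl⟩
          exact cross_cross hφ hP ht1 ht2 ht3 hwU hw₁U hwne hqA hq₁A heH he₁H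
        exact le_trans (fiber_card_le hφ hwU _ _ hsh)
          ((by decide : ∀ qq ∈ MP, (AP.filter (fun q => (q ∩ qq).Nonempty)).card ≤ 3) q₁ hq₁M)
      have hsum : ∑ w ∈ W, (Cr.filter (fun e => w ∈ e)).card ≤ 6 + 3 * (W.card - 1) := by
        rw [← Finset.add_sum_erase W _ hw₁W]
        have h2 := Finset.sum_le_card_nsmul (W.erase w₁) _ 3 hsmall
        rw [Finset.card_erase_of_mem hw₁W, smul_eq_mul] at h2
        omega
      refine le_trans (add_le_add hI11 (le_trans hcr1 hsum)) ?_
      have hW2 : 2 ≤ W.card := hs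
      omega
    · have hall : ∀ w ∈ W, (Cr.filter (fun e => w ∈ e)).card ≤ 3 := by
        intro w hwW
        have hwU : w ∉ emb (CorAux.phi x₁ x₂ x₃ y₁ y₂ y₃) Finset.univ := (Finset.mem_sdiff.1 hwW).2
        have hsh : ∀ e ∈ Cr.filter (fun e => w ∈ e),
            ∃ q ∈ AP.filter (fun q => q ∉ MP), e = insert w (emb (CorAux.phi x₁ x₂ x₃ y₁ y₂ y₃) q) := by
          intro e he
          obtain ⟨q, hqA, rfl⟩ := hfibshape w hwW e he
          refine ⟨q, Finset.mem_filter.2 ⟨hqA, fun hqM =>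
            hM ⟨_, (Finset.mem_filter.1 he).1, q, hqM, ?_⟩⟩, rfl⟩
          rw [insert_inter_emb hφ hwU, Finset.inter_univ]
        exact le_trans (fiber_card_le hφ hwU _ _ hsh)
          (by decide : (AP.filter (fun q => q ∉ MP)).card ≤ 3)
      have hsum : ∑ w ∈ W, (Cr.filter (fun e => w ∈ e)).card ≤ W.card * 3 := by
        have h2 := Finset.sum_le_card_nsmul W _ 3 hall
        rwa [smul_eq_mul] at h2
      refine le_trans (add_le_add hI11 (le_trans hcr1 hsum)) ?_
      omega
end

section
/- For n ≥ 11, there exists an n-vertex 3-graph that contains two disjoint edges (a copy of the matching M³₂), contains no linear path P³₃, and has C(n-4,2) + 4 edges. Hence the conditional Turán number ex₃(n; P³₃ | M³₂) is at least C(n-4,2) + 4. -/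
set_option maxHeartbeats 1000000 in
theorem lower_bound_P33_given_matching (n : ℕ) (hn : 11 ≤ n) :
    ∃ H : Finset (Finset (Fin n)), (∀ e ∈ H, e.card = 3) ∧ ¬ HasP33 H ∧
      (∃ e ∈ H, ∃ f ∈ H, e ∩ f = ∅) ∧ H.card = (n - 4).choose 2 + 4 := by
  obtain ⟨v0, hv0⟩ : ∃ v : Fin n, v.val = 0 := ⟨⟨0, by omega⟩, rfl⟩
  obtain ⟨v1, hv1⟩ : ∃ v : Fin n, v.val = 1 := ⟨⟨1, by omega⟩, rfl⟩
  obtain ⟨v2, hv2⟩ : ∃ v : Fin n, v.val = 2 := ⟨⟨2, by omega⟩, rfl⟩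
  obtain ⟨v3, hv3⟩ : ∃ v : Fin n, v.val = 3 := ⟨⟨3, by omega⟩, rfl⟩
  obtain ⟨v4, hv4⟩ : ∃ v : Fin n, v.val = 4 := ⟨⟨4, by omega⟩, rfl⟩
  obtain ⟨v5, hv5⟩ : ∃ v : Fin n, v.val = 5 := ⟨⟨5, by omega⟩, rfl⟩
  set L : Finset (Fin n) := Finset.Ici v4 with hL
  have hLmem : ∀ x : Fin n, x ∈ L ↔ 4 ≤ x.val := by
    intro x; simp [hL, Fin.le_def, hv4]
  set K : Finset (Finset (Fin n)) :=
    {{v0, v1, v2}, {v0, v1, v3}, {v0, v2, v3}, {v1, v2, v3}} with hK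
  set S : Finset (Finset (Fin n)) := (L.powersetCard 2).image (insert v0) with hS
  set H : Finset (Finset (Fin n)) := K ∪ S with hH
  have hSmem : ∀ e, e ∈ S ↔ ∃ p ⊆ L, p.card = 2 ∧ e = insert v0 p := by
    intro e
    simp only [hS, Finset.mem_image, Finset.mem_powersetCard]
    constructor
    · rintro ⟨p, ⟨hp1, hp2⟩, rfl⟩; exact ⟨p, hp1, hp2, rfl⟩
    · rintro ⟨p, hp1, hp2, rfl⟩; exact ⟨p, ⟨hp1, hp2⟩, rfl⟩
  have hv0L : v0 ∉ L := by simp [hLmem, hv0]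
  have hKmem : ∀ e ∈ K, e = {v0,v1,v2} ∨ e = {v0,v1,v3} ∨ e = {v0,v2,v3} ∨ e = {v1,v2,v3} := by
    intro e he; simpa [hK] using he
  have hKcard : ∀ e ∈ K, e.card = 3 := by
    intro e he
    rcases hKmem e he with rfl|rfl|rfl|rfl <;>
      simp [Finset.card_insert_of_notMem, Fin.ext_iff, hv0, hv1, hv2, hv3]
  have hScard : ∀ e ∈ S, e.card = 3 := by
    intro e he
    rw [hSmem] at he
    obtain ⟨p, hpL, hp2, rfl⟩ := he
    rw [Finset.card_insert_of_notMem (fun h => hv0L (hpL h)), hp2]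
  refine ⟨H, ?_, ?_, ?_, ?_⟩
  · intro e he
    rcases Finset.mem_union.1 he with h | h
    · exact hKcard e h
    · exact hScard e h
  · -- no P33
    have hT : ∀ e ∈ H, (e ∩ ({v1, v2, v3} : Finset (Fin n))).card ≠ 1 := by
      intro e he
      rcases Finset.mem_union.1 he with h | h
      · have h2 : 2 ≤ (e ∩ ({v1, v2, v3} : Finset (Fin n))).card := by
          have key : ∀ a b : Fin n, a ≠ b → a ∈ e → b ∈ e →
              a ∈ ({v1, v2, v3} : Finset (Fin n)) → b ∈ ({v1, v2, v3} : Finset (Fin n)) →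
              2 ≤ (e ∩ ({v1, v2, v3} : Finset (Fin n))).card := by
            intro a b hab ha hb ha' hb'
            calc 2 = ({a, b} : Finset (Fin n)).card := by
                  rw [Finset.card_insert_of_notMem (by simpa using hab), Finset.card_singleton]
              _ ≤ _ := Finset.card_le_card (by
                  intro x hx
                  simp only [Finset.mem_insert, Finset.mem_singleton] at hx
                  rcases hx with rfl|rfl <;> rw [Finset.mem_inter] <;>
                    exact ⟨by assumption, by assumption⟩)
          rcases hKmem e h with rfl|rfl|rfl|rfl
          · exact key v1 v2 (by simp [Fin.ext_iff, hv1, hv2]) (by simp) (by simp)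
              (by simp) (by simp)
          · exact key v1 v3 (by simp [Fin.ext_iff, hv1, hv3]) (by simp) (by simp)
              (by simp) (by simp)
          · exact key v2 v3 (by simp [Fin.ext_iff, hv2, hv3]) (by simp) (by simp)
              (by simp) (by simp)
          · exact key v2 v3 (by simp [Fin.ext_iff, hv2, hv3]) (by simp) (by simp)
              (by simp) (by simp)
        omega
      · rw [hSmem] at h
        obtain ⟨p, hpL, hp2, rfl⟩ := h
        have : insert v0 p ∩ ({v1, v2, v3} : Finset (Fin n)) = ∅ := by
          apply Finset.eq_empty_of_forall_notMem
          intro x hx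
          rw [Finset.mem_inter, Finset.mem_insert] at hx
          obtain ⟨h1 | h1, h2⟩ := hx
          · subst h1
            simp only [Finset.mem_insert, Finset.mem_singleton] at h2
            rcases h2 with rfl|rfl|rfl <;> omega
          · have h4 := (hLmem x).1 (hpL h1)
            simp only [Finset.mem_insert, Finset.mem_singleton] at h2
            rcases h2 with rfl|rfl|rfl <;> omega
        rw [this]; simp
    have hNo0 : ∀ e ∈ H, v0 ∉ e → e = {v1, v2, v3} := by
      intro e he h0
      rcases Finset.mem_union.1 he with h | h
      · rcases hKmem e h with rfl|rfl|rfl|rfl <;> simp_all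
      · rw [hSmem] at h
        obtain ⟨p, hpL, hp2, rfl⟩ := h
        simp at h0
    rintro ⟨e₁, e₂, e₃, h1, h2, h3, h12, h23, h13⟩
    have h0 : v0 ∉ e₁ ∨ v0 ∉ e₃ := by
      by_contra hc
      push_neg at hc
      have : v0 ∈ e₁ ∩ e₃ := Finset.mem_inter.2 ⟨hc.1, hc.2⟩
      rw [h13] at this; exact absurd this (Finset.notMem_empty _)
    rcases h0 with h0 | h0
    · have he1 := hNo0 e₁ h1 h0
      rw [he1, Finset.inter_comm] at h12
      exact hT e₂ h2 h12
    · have he3 := hNo0 e₃ h3 h0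
      rw [he3] at h23
      exact hT e₂ h2 h23
  · -- matching
    refine ⟨{v1, v2, v3}, ?_, insert v0 {v4, v5}, ?_, ?_⟩
    · exact Finset.mem_union_left _ (by simp [hK])
    · apply Finset.mem_union_right
      rw [hSmem]
      refine ⟨{v4, v5}, ?_, ?_, rfl⟩
      · intro x hx; simp only [Finset.mem_insert, Finset.mem_singleton] at hx
        rcases hx with rfl|rfl <;> simp [hLmem, hv4, hv5]
      · rw [Finset.card_insert_of_notMem (by simp [Fin.ext_iff, hv4, hv5]),
          Finset.card_singleton]
    · apply Finset.eq_empty_of_forall_notMem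
      intro x hx
      rw [Finset.mem_inter] at hx
      obtain ⟨ha, hb⟩ := hx
      simp only [Finset.mem_insert, Finset.mem_singleton] at ha hb
      rcases ha with rfl|rfl|rfl <;> rcases hb with h|h|h <;>
        first
        | (subst h; omega)
        | (rw [Fin.ext_iff] at h; omega)
  · -- cardinality
    have hdisj : Disjoint K S := by
      rw [Finset.disjoint_left]
      intro e heK heS
      rw [hSmem] at heS
      obtain ⟨p, hpL, hp2, hep⟩ := heS
      obtain ⟨x, hx⟩ := Finset.card_pos.1 (by omega : 0 < p.card)
      have h4 : 4 ≤ x.val := (hLmem x).1 (hpL hx)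
      have hxe : x ∈ e := hep ▸ Finset.mem_insert_of_mem hx
      rcases hKmem e heK with rfl|rfl|rfl|rfl <;>
        simp only [Finset.mem_insert, Finset.mem_singleton] at hxe <;>
        rcases hxe with rfl|rfl|rfl <;> omega
    have hne : ∀ (a : Fin n) (s t : Finset (Fin n)), a ∈ s → a ∉ t → s ≠ t :=
      fun a s t hs ht h => ht (h ▸ hs)
    have n1 : ({v0,v1,v2} : Finset (Fin n)) ≠ {v0,v1,v3} :=
      hne v2 _ _ (by simp) (by simp [Fin.ext_iff, hv0, hv1, hv2, hv3])
    have n2 : ({v0,v1,v2} : Finset (Fin n)) ≠ {v0,v2,v3} :=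
      hne v1 _ _ (by simp) (by simp [Fin.ext_iff, hv0, hv1, hv2, hv3])
    have n3 : ({v0,v1,v2} : Finset (Fin n)) ≠ {v1,v2,v3} :=
      hne v0 _ _ (by simp) (by simp [Fin.ext_iff, hv0, hv1, hv2, hv3])
    have m1 : ({v0,v1,v3} : Finset (Fin n)) ≠ {v0,v2,v3} :=
      hne v1 _ _ (by simp) (by simp [Fin.ext_iff, hv0, hv1, hv2, hv3])
    have m2 : ({v0,v1,v3} : Finset (Fin n)) ≠ {v1,v2,v3} :=
      hne v0 _ _ (by simp) (by simp [Fin.ext_iff, hv0, hv1, hv2, hv3])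
    have p1 : ({v0,v2,v3} : Finset (Fin n)) ≠ {v1,v2,v3} :=
      hne v0 _ _ (by simp) (by simp [Fin.ext_iff, hv0, hv1, hv2, hv3])
    have hKc : K.card = 4 := by
      rw [hK, Finset.card_insert_of_notMem (by simp [n1, n2, n3]),
        Finset.card_insert_of_notMem (by simp [m1, m2]),
        Finset.card_insert_of_notMem (by simp [p1]), Finset.card_singleton]
    have hSc : S.card = (n - 4).choose 2 := by
      rw [hS, Finset.card_image_of_injOn, Finset.card_powersetCard, hL, Fin.card_Ici, hv4]
      intro p hp q hq hpq
      rw [Finset.mem_coe, Finset.mem_powersetCard] at hp hq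
      have h1 : v0 ∉ p := fun h => hv0L (hp.1 h)
      have h2 : v0 ∉ q := fun h => hv0L (hq.1 h)
      rw [← Finset.erase_insert h1, ← Finset.erase_insert h2, hpq]
    rw [hH, Finset.card_union_of_disjoint hdisj, hKc, hSc]
    omega
end

section
/- For n ≥ 7, there exists an n-vertex 3-graph containing a copy of P³₃ but no copy of the triangle C³₃, with C(n-2,2) + 1 edges. Hence ex₃(n; C³₃ | P³₃) ≥ C(n-2,2) + 1. -/
set_option maxHeartbeats 1000000 in
theorem lower_bound_C33_given_P33 (n : ℕ) (hn : 7 ≤ n) :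
    ∃ H : Finset (Finset (Fin n)), (∀ e ∈ H, e.card = 3) ∧ HasP33 H ∧ ¬ HasC33 H ∧
      H.card = (n - 2).choose 2 + 1 := by
  let c : Fin 7 → Fin n := Fin.castLE hn
  have hcinj : Function.Injective c := Fin.castLE_injective hn
  have hne : ∀ i j : Fin 7, i ≠ j → c i ≠ c j := fun i j h hh => h (hcinj hh)
  set A : Finset (Finset (Fin n)) :=
    (Finset.univ \ {c 0, c 1}).image (fun w => {c 0, c 1, w}) with hAdef
  set B : Finset (Finset (Fin n)) :=
    ((Finset.univ \ {c 0, c 1, c 2}).powersetCard 2).image (insert (c 2)) with hBdef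
  have hAmem : ∀ e ∈ A, c 0 ∈ e ∧ c 1 ∈ e ∧ e.card = 3 := by
    intro e he
    simp only [hAdef, Finset.mem_image, Finset.mem_sdiff, Finset.mem_insert,
      Finset.mem_singleton, Finset.mem_univ, true_and] at he
    obtain ⟨w, hw, rfl⟩ := he
    push_neg at hw
    refine ⟨by simp, by simp, ?_⟩
    rw [Finset.card_insert_of_notMem (by
        simp only [Finset.mem_insert, Finset.mem_singleton, not_or]
        exact ⟨hne 0 1 (by decide), fun h => hw.1 h.symm⟩),
      Finset.card_insert_of_notMem (by
        simp only [Finset.mem_singleton]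
        exact fun h => hw.2 h.symm),
      Finset.card_singleton]
  have hBmem : ∀ e ∈ B, c 2 ∈ e ∧ c 0 ∉ e ∧ c 1 ∉ e ∧ e.card = 3 := by
    intro e he
    simp only [hBdef, Finset.mem_image, Finset.mem_powersetCard] at he
    obtain ⟨p, ⟨hps, hp2⟩, rfl⟩ := he
    have h0 : c 0 ∉ p := fun h => by simpa using hps h
    have h1 : c 1 ∉ p := fun h => by simpa using hps h
    have h2 : c 2 ∉ p := fun h => by simpa using hps h
    refine ⟨by simp, ?_, ?_, ?_⟩
    · simp [Finset.mem_insert, hne 0 2 (by decide), h0]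
    · simp [Finset.mem_insert, hne 1 2 (by decide), h1]
    · rw [Finset.card_insert_of_notMem h2, hp2]
  have hdisj : Disjoint A B := by
    rw [Finset.disjoint_left]
    intro e heA heB
    exact (hBmem e heB).2.1 (hAmem e heA).1
  refine ⟨A ∪ B, ?_, ?_, ?_, ?_⟩
  · intro e he
    rcases Finset.mem_union.mp he with h | h
    · exact (hAmem e h).2.2
    · exact (hBmem e h).2.2.2
  · -- HasP33
    refine ⟨({0,1,3} : Finset (Fin 7)).image c, ({2,3,4} : Finset (Fin 7)).image c,
      ({2,5,6} : Finset (Fin 7)).image c, ?_, ?_, ?_, ?_, ?_, ?_⟩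
    · apply Finset.mem_union_left
      rw [hAdef, Finset.mem_image]
      refine ⟨c 3, by simp [hne 3 0 (by decide), hne 3 1 (by decide)], ?_⟩
      simp [Finset.image_insert]
    · apply Finset.mem_union_right
      rw [hBdef, Finset.mem_image]
      refine ⟨{c 3, c 4}, ?_, ?_⟩
      · rw [Finset.mem_powersetCard]
        constructor
        · intro t ht
          simp only [Finset.mem_insert, Finset.mem_singleton] at ht
          rcases ht with rfl | rfl <;>
            simp [hne 3 0 (by decide), hne 3 1 (by decide), hne 3 2 (by decide),
              hne 4 0 (by decide), hne 4 1 (by decide), hne 4 2 (by decide)]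
        · rw [Finset.card_insert_of_notMem (by simp [hne 3 4 (by decide)]),
            Finset.card_singleton]
      · simp [Finset.image_insert]
    · apply Finset.mem_union_right
      rw [hBdef, Finset.mem_image]
      refine ⟨{c 5, c 6}, ?_, ?_⟩
      · rw [Finset.mem_powersetCard]
        constructor
        · intro t ht
          simp only [Finset.mem_insert, Finset.mem_singleton] at ht
          rcases ht with rfl | rfl <;>
            simp [hne 5 0 (by decide), hne 5 1 (by decide), hne 5 2 (by decide),
              hne 6 0 (by decide), hne 6 1 (by decide), hne 6 2 (by decide)]
        · rw [Finset.card_insert_of_notMem (by simp [hne 5 6 (by decide)]),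
            Finset.card_singleton]
      · simp [Finset.image_insert]
    · rw [← Finset.image_inter _ _ hcinj]
      have : ({0,1,3} : Finset (Fin 7)) ∩ {2,3,4} = {3} := by decide
      rw [this, Finset.card_image_of_injective _ hcinj, Finset.card_singleton]
    · rw [← Finset.image_inter _ _ hcinj]
      have : ({2,3,4} : Finset (Fin 7)) ∩ {2,5,6} = {2} := by decide
      rw [this, Finset.card_image_of_injective _ hcinj, Finset.card_singleton]
    · rw [← Finset.image_inter _ _ hcinj]
      have : ({0,1,3} : Finset (Fin 7)) ∩ {2,5,6} = ∅ := by decide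
      rw [this, Finset.image_empty]
  · -- no C33
    rintro ⟨a, b, cc, d, e, f, h6, h1, h2, h3⟩
    -- distinctness
    have hnd : ([a, b, cc, d, e, f] : List (Fin n)).Nodup := by
      have hcard : ([a, b, cc, d, e, f] : List (Fin n)).toFinset.card = 6 := by
        simpa using h6
      rw [List.card_toFinset] at hcard
      rw [← List.dedup_eq_self]
      exact ([a, b, cc, d, e, f] : List (Fin n)).dedup_sublist.eq_of_length (by simp [hcard])
    simp only [List.nodup_cons, List.mem_cons, List.not_mem_nil, or_false,
      List.nodup_nil, and_true, not_or] at hnd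
    have g1 : (c 0 ∈ ({a,b,cc} : Finset (Fin n)) ∧ c 1 ∈ ({a,b,cc} : Finset (Fin n))) ∨
        (c 2 ∈ ({a,b,cc} : Finset (Fin n)) ∧ c 0 ∉ ({a,b,cc} : Finset (Fin n)) ∧
          c 1 ∉ ({a,b,cc} : Finset (Fin n))) := by
      rcases Finset.mem_union.mp h1 with h | h
      · exact Or.inl ⟨(hAmem _ h).1, (hAmem _ h).2.1⟩
      · exact Or.inr ⟨(hBmem _ h).1, (hBmem _ h).2.1, (hBmem _ h).2.2.1⟩
    have g2 : (c 0 ∈ ({cc,d,e} : Finset (Fin n)) ∧ c 1 ∈ ({cc,d,e} : Finset (Fin n))) ∨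
        (c 2 ∈ ({cc,d,e} : Finset (Fin n)) ∧ c 0 ∉ ({cc,d,e} : Finset (Fin n)) ∧
          c 1 ∉ ({cc,d,e} : Finset (Fin n))) := by
      rcases Finset.mem_union.mp h2 with h | h
      · exact Or.inl ⟨(hAmem _ h).1, (hAmem _ h).2.1⟩
      · exact Or.inr ⟨(hBmem _ h).1, (hBmem _ h).2.1, (hBmem _ h).2.2.1⟩
    have g3 : (c 0 ∈ ({e,f,a} : Finset (Fin n)) ∧ c 1 ∈ ({e,f,a} : Finset (Fin n))) ∨
        (c 2 ∈ ({e,f,a} : Finset (Fin n)) ∧ c 0 ∉ ({e,f,a} : Finset (Fin n)) ∧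
          c 1 ∉ ({e,f,a} : Finset (Fin n))) := by
      rcases Finset.mem_union.mp h3 with h | h
      · exact Or.inl ⟨(hAmem _ h).1, (hAmem _ h).2.1⟩
      · exact Or.inr ⟨(hBmem _ h).1, (hBmem _ h).2.1, (hBmem _ h).2.2.1⟩
    have hxy : c 0 ≠ c 1 := hne 0 1 (by decide)
    have hxz : c 0 ≠ c 2 := hne 0 2 (by decide)
    have hyz : c 1 ≠ c 2 := hne 1 2 (by decide)
    simp only [Finset.mem_insert, Finset.mem_singleton, not_or] at g1 g2 g3
    simp only [Fin.ext_iff] at g1 g2 g3 hnd hxy hxz hyz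
    have h0 : ((c 0 : Fin n) : ℕ) = 0 := rfl
    have h1 : ((c 1 : Fin n) : ℕ) = 1 := rfl
    have h2 : ((c 2 : Fin n) : ℕ) = 2 := rfl
    rw [h0, h1, h2] at g1 g2 g3
    rcases g1 with g1 | g1 <;> rcases g2 with g2 | g2 <;> rcases g3 with g3 | g3 <;> omega
  · -- cardinality
    rw [Finset.card_union_of_disjoint hdisj]
    have hAcard : A.card = n - 2 := by
      rw [hAdef, Finset.card_image_of_injOn]
      · rw [Finset.card_sdiff_of_subset (Finset.subset_univ _), Finset.card_univ, Fintype.card_fin,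
          Finset.card_insert_of_notMem (by simp [hne 0 1 (by decide)]), Finset.card_singleton]
      · intro w hw w' hw' h
        simp only [Finset.mem_coe, Finset.mem_sdiff, Finset.mem_univ, Finset.mem_insert,
          Finset.mem_singleton, true_and, not_or] at hw hw'
        have hmem : w' ∈ ({c 0, c 1, w} : Finset (Fin n)) := by
          have : w' ∈ ({c 0, c 1, w'} : Finset (Fin n)) := by simp
          simpa only [← h] using this
        simp only [Finset.mem_insert, Finset.mem_singleton] at hmem
        rcases hmem with h' | h' | h'
        · exact absurd h' hw'.1
        · exact absurd h' hw'.2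
        · exact h'.symm
    have hBcard : B.card = (n - 3).choose 2 := by
      rw [hBdef, Finset.card_image_of_injOn]
      · rw [Finset.card_powersetCard, Finset.card_sdiff_of_subset (Finset.subset_univ _),
          Finset.card_univ, Fintype.card_fin,
          Finset.card_insert_of_notMem (by simp [hne 0 1 (by decide), hne 0 2 (by decide)]),
          Finset.card_insert_of_notMem (by simp [hne 1 2 (by decide)]), Finset.card_singleton]
      · intro p hp q hq h
        rw [Finset.mem_coe, Finset.mem_powersetCard] at hp hq
        have hzp : c 2 ∉ p := fun hh => by simpa using hp.1 hh
        have hzq : c 2 ∉ q := fun hh => by simpa using hq.1 hh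
        rw [← Finset.erase_insert hzp, ← Finset.erase_insert hzq, h]
    rw [hAcard, hBcard]
    obtain ⟨k, rfl⟩ : ∃ k, n = k + 7 := ⟨n - 7, by omega⟩
    have e1 : k + 7 - 2 = k + 5 := by omega
    have e2 : k + 7 - 3 = k + 4 := by omega
    rw [e1, e2]
    have : (k + 5).choose 2 = (k + 4).choose 1 + (k + 4).choose 2 := Nat.choose_succ_succ _ _
    rw [this, Nat.choose_one_right]
    omega
end
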